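/- arXiv:1910.08717 — 7 statements merged into one kernel-verified Lean document; each statement's English description precedes it below -/
import Mathlib

section
/- Let A and B be nonempty finite subsets of ℝ² such that A lies strictly above the horizontal line y = c, B lies strictly below it, and A ∪ B is in general position. Then there are at most two bridges of (A,B), i.e., at most two pairs (a,b) with a ∈ A and b ∈ B such that the closed segment [a,b] is contained in the frontier of convexHull(A ∪ B). -/
open Set

/-- Coordinates of a linear combination in `EuclideanSpace ℝ (Fin 2)`. -/
private lemma bridge_coord_comb (r s : ℝ) (a b : EuclideanSpace ℝ (Fin 2)) (i : Fin 2) :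
    (r • a + s • b) i = r * a i + s * b i := by
  simp [PiLp.add_apply, PiLp.smul_apply, smul_eq_mul]

private lemma bridge_pt_ext {u v : EuclideanSpace ℝ (Fin 2)} (h0 : u 0 = v 0)
    (h1 : u 1 = v 1) : u = v := by
  ext i
  fin_cases i <;> assumption

/-- Two points with the same second coordinate on the (non-horizontal) line through `a`, `b`
coincide. -/
private lemma bridge_eq_on_line_of_same_snd {a b u v : EuclideanSpace ℝ (Fin 2)}
    (hab : a 1 ≠ b 1)
    (hu : u ∈ line[ℝ, a, b]) (hv : v ∈ line[ℝ, a, b])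
    (huv : u 1 = v 1) : u = v := by
  rw [show u = (u -ᵥ a) +ᵥ a by simp, vadd_left_mem_affineSpan_pair] at hu
  rw [show v = (v -ᵥ a) +ᵥ a by simp, vadd_left_mem_affineSpan_pair] at hv
  obtain ⟨r, hr⟩ := hu
  obtain ⟨s, hs⟩ := hv
  have hr1 : r * (b 1 - a 1) = u 1 - a 1 := by
    have := congrArg (fun w : EuclideanSpace ℝ (Fin 2) => w 1) hr
    simpa [vsub_eq_sub] using this
  have hs1 : s * (b 1 - a 1) = v 1 - a 1 := by
    have := congrArg (fun w : EuclideanSpace ℝ (Fin 2) => w 1) hs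
    simpa [vsub_eq_sub] using this
  have hrs : r = s := by
    have hne : b 1 - a 1 ≠ 0 := sub_ne_zero.2 (Ne.symm hab)
    have : r * (b 1 - a 1) = s * (b 1 - a 1) := by rw [hr1, hs1, huv]
    exact mul_right_cancel₀ hne this
  have h2 : u -ᵥ a = v -ᵥ a := by rw [← hr, ← hs, hrs]
  simpa [vsub_eq_sub, sub_left_inj] using h2

/-- A strictly positive convex combination of four points of a convex set, three of which are
not collinear, lies in the interior of the set. -/
private lemma bridge_quad_mem_interior {s : Set (EuclideanSpace ℝ (Fin 2))} (hs : Convex ℝ s)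
    {p q x y : EuclideanSpace ℝ (Fin 2)}
    (hp : p ∈ s) (hq : q ∈ s) (hx : x ∈ s) (hy : y ∈ s)
    (hncol : ¬ Collinear ℝ ({p, q, x} : Set (EuclideanSpace ℝ (Fin 2))))
    {α β γ δ : ℝ} (hα : 0 < α) (hβ : 0 < β) (hγ : 0 < γ) (hδ : 0 ≤ δ)
    (hsum : α + β + γ + δ = 1) :
    α • p + β • q + γ • x + δ • y ∈ interior s := by
  have hAI : AffineIndependent ℝ ![p, q, x] :=
    affineIndependent_iff_not_collinear_set.2 hncol
  have htop : affineSpan ℝ (Set.range ![p, q, x]) = ⊤ := by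
    rw [hAI.affineSpan_eq_top_iff_card_eq_finrank_add_one]
    simp [finrank_euclideanSpace]
  let b : AffineBasis (Fin 3) ℝ (EuclideanSpace ℝ (Fin 2)) := ⟨![p, q, x], hAI, htop⟩
  have hσ : 0 < α + β + γ := by positivity
  set σ := α + β + γ with hσdef
  let w : Fin 3 → ℝ := ![α / σ, β / σ, γ / σ]
  have hwpos : ∀ i, 0 < w i := by
    intro i; fin_cases i
    · exact div_pos hα hσ
    · exact div_pos hβ hσ
    · exact div_pos hγ hσ
  have hw : ∑ i, w i = 1 := by
    simp only [w, Fin.sum_univ_three, Matrix.cons_val_zero, Matrix.cons_val_one, Matrix.head_cons,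
      Matrix.cons_val_two, Matrix.tail_cons]
    field_simp
    exact hσdef.symm
  have hcomb : (Finset.univ.affineCombination ℝ (⇑b) w) =
      (α/σ) • p + (β/σ) • q + (γ/σ) • x := by
    rw [Finset.affineCombination_eq_linear_combination _ _ _ hw]
    show ∑ i, w i • (![p, q, x]) i = _
    simp only [w, Fin.sum_univ_three, Matrix.cons_val_zero, Matrix.cons_val_one, Matrix.head_cons,
      Matrix.cons_val_two, Matrix.tail_cons]
  have hg : Finset.univ.affineCombination ℝ (⇑b) w ∈ interior (convexHull ℝ (Set.range ⇑b)) := by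
    rw [b.interior_convexHull]
    intro i
    rw [AffineBasis.coord_apply_combination_of_mem b (Finset.mem_univ i) hw]
    exact hwpos i
  have hrange : Set.range (⇑b) = ({p, q, x} : Set (EuclideanSpace ℝ (Fin 2))) := by
    show Set.range ![p, q, x] = _
    rw [Matrix.range_cons, Matrix.range_cons, Matrix.range_cons, Matrix.range_empty,
      Set.union_empty, Set.singleton_union, Set.singleton_union]
  rw [hrange, hcomb] at hg
  have hsub : convexHull ℝ ({p, q, x} : Set (EuclideanSpace ℝ (Fin 2))) ⊆ s := by
    apply convexHull_min _ hs
    rintro z hz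
    simp only [Set.mem_insert_iff, Set.mem_singleton_iff] at hz
    rcases hz with rfl | rfl | rfl <;> assumption
  have hg' : (α/σ) • p + (β/σ) • q + (γ/σ) • x ∈ interior s := interior_mono hsub hg
  have hz : α • p + β • q + γ • x + δ • y
      = σ • ((α/σ) • p + (β/σ) • q + (γ/σ) • x) + δ • y := by
    have hσ0 : σ ≠ 0 := ne_of_gt hσ
    match_scalars <;> field_simp
  rw [hz]
  exact hs.combo_interior_closure_mem_interior hg' (subset_closure hy) hσ hδ (by linarith)

/-- If `A` lies strictly above the line `y = c`, `B` lies strictly below it, and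
`A ∪ B` is in general position, then there are at most two bridges of `(A, B)`:
pairs `(a, b) ∈ A × B` whose segment lies on the boundary of `convexHull (A ∪ B)`. -/
theorem bridges_le_two
    (A B : Set (EuclideanSpace ℝ (Fin 2))) (c : ℝ)
    (hAfin : A.Finite) (hBfin : B.Finite)
    (hAne : A.Nonempty) (hBne : B.Nonempty)
    (hAabove : ∀ p ∈ A, c < p 1)
    (hBbelow : ∀ p ∈ B, p 1 < c)
    (hgen : ∀ p ∈ A ∪ B, ∀ q ∈ A ∪ B, ∀ r ∈ A ∪ B, p ≠ q → q ≠ r → p ≠ r →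
      ¬ Collinear ℝ ({p, q, r} : Set (EuclideanSpace ℝ (Fin 2)))) :
    {ab : EuclideanSpace ℝ (Fin 2) × EuclideanSpace ℝ (Fin 2) |
        ab.1 ∈ A ∧ ab.2 ∈ B ∧
          segment ℝ ab.1 ab.2 ⊆ frontier (convexHull ℝ (A ∪ B))}.encard ≤ 2 := by
  classical
  set H : Set (EuclideanSpace ℝ (Fin 2)) := convexHull ℝ (A ∪ B) with hHdef
  set F : Set (EuclideanSpace ℝ (Fin 2)) := frontier H with hFdef
  set Br : Set (EuclideanSpace ℝ (Fin 2) × EuclideanSpace ℝ (Fin 2)) :=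
    {ab | ab.1 ∈ A ∧ ab.2 ∈ B ∧ segment ℝ ab.1 ab.2 ⊆ F} with hBrdef
  show Br.encard ≤ 2
  have hSfin : (A ∪ B).Finite := hAfin.union hBfin
  have hclosed : IsClosed H := (hSfin.isCompact_convexHull ℝ).isClosed
  have hconv : Convex ℝ H := convex_convexHull ℝ _
  have hFH : F ⊆ H := hclosed.frontier_subset
  have hFnotint : ∀ m ∈ F, m ∉ interior H := by
    intro m hm
    rw [hFdef, hclosed.frontier_eq] at hm
    exact hm.2
  have hmemH : ∀ z ∈ A ∪ B, z ∈ H := fun z hz => subset_convexHull ℝ _ hz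
  -- the crossing parameter of a bridge
  have hcross : ∀ a ∈ A, ∀ b ∈ B, ∃ r : ℝ, 0 < r ∧ r < 1 ∧ (r • a + (1-r) • b) 1 = c := by
    intro a ha b hb
    have h1 : b 1 < c := hBbelow b hb
    have h2 : c < a 1 := hAabove a ha
    refine ⟨(c - b 1) / (a 1 - b 1), div_pos (by linarith) (by linarith),
      (div_lt_one (by linarith)).2 (by linarith), ?_⟩
    rw [bridge_coord_comb]
    have hne : a 1 - b 1 ≠ 0 := by linarith
    field_simp
    ring
  have hsegmem : ∀ (a b : EuclideanSpace ℝ (Fin 2)) (r : ℝ), 0 < r → r < 1 →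
      r • a + (1-r) • b ∈ segment ℝ a b := by
    intro a b r hr0 hr1
    exact ⟨r, 1-r, hr0.le, by linarith, by ring, rfl⟩
  have hlinemem : ∀ (a b : EuclideanSpace ℝ (Fin 2)) (r : ℝ),
      r • a + (1-r) • b ∈ line[ℝ, a, b] := by
    intro a b r
    have h : r • a + (1-r) • b = (1-r) • (b -ᵥ a) +ᵥ a := by
      simp only [vsub_eq_sub, vadd_eq_add]
      module
    rw [h]
    exact smul_vsub_vadd_mem_affineSpan_pair (1-r) a b
  -- distinctness facts from the separating line
  have hyne : ∀ a ∈ A, ∀ b ∈ B, a ≠ b := by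
    intro a ha b hb h
    have := hAabove a ha
    have := hBbelow b hb
    rw [h] at *
    linarith
  -- Key 1 : two bridges with the same crossing point are equal.
  have key1 : ∀ a ∈ A, ∀ b ∈ B, ∀ a' ∈ A, ∀ b' ∈ B,
      segment ℝ a b ⊆ F →
      ∀ r r' : ℝ, 0 < r → r < 1 → 0 < r' → r' < 1 →
      r • a + (1-r) • b = r' • a' + (1-r') • b' → a = a' ∧ b = b' := by
    intro a ha b hb a' ha' b' hb' hseg r r' hr0 hr1 hr0' hr1' heq
    have hmF : r • a + (1-r) • b ∈ F := hseg (hsegmem a b r hr0 hr1)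
    have haH : a ∈ H := hmemH a (Or.inl ha)
    have hbH : b ∈ H := hmemH b (Or.inr hb)
    have ha'H : a' ∈ H := hmemH a' (Or.inl ha')
    have hb'H : b' ∈ H := hmemH b' (Or.inr hb')
    by_cases hca : Collinear ℝ ({a, b, a'} : Set (EuclideanSpace ℝ (Fin 2)))
    · by_cases hcb : Collinear ℝ ({a, b, b'} : Set (EuclideanSpace ℝ (Fin 2)))
      · -- both collinear : general position forces equality
        have hab : a ≠ b := hyne a ha b hb
        by_cases haa : a = a'
        · refine ⟨haa, ?_⟩
          by_cases hbb : b = b'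
          · exact hbb
          · exact absurd hcb
              (hgen a (Or.inl ha) b (Or.inr hb) b' (Or.inr hb') hab hbb (hyne a ha b' hb'))
        · exact absurd hca
            (hgen a (Or.inl ha) b (Or.inr hb) a' (Or.inl ha')
              hab (Ne.symm (hyne a' ha' b hb)) haa)
      · -- b' not on line ab : crossing point is interior, contradiction
        exfalso
        have hsum : r/2 + (1-r)/2 + (1-r')/2 + r'/2 = 1 := by ring
        have hq := bridge_quad_mem_interior hconv haH hbH hb'H ha'H hcb
          (div_pos hr0 two_pos) (div_pos (by linarith) two_pos)
          (div_pos (by linarith) two_pos) (div_pos hr0' two_pos).le hsum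
        have hzeq : (r/2) • a + ((1-r)/2) • b + ((1-r')/2) • b' + (r'/2) • a'
            = r • a + (1-r) • b := by
          have h2 : (r/2) • a + ((1-r)/2) • b + ((1-r')/2) • b' + (r'/2) • a'
              = (1/2 : ℝ) • (r • a + (1-r) • b) + (1/2 : ℝ) • (r' • a' + (1-r') • b') := by
            module
          rw [h2, ← heq]
          module
        rw [hzeq] at hq
        exact hFnotint _ hmF hq
    · -- a' not on line ab : crossing point is interior, contradiction
      exfalso
      have hsum : r/2 + (1-r)/2 + r'/2 + (1-r')/2 = 1 := by ring
      have hq := bridge_quad_mem_interior hconv haH hbH ha'H hb'H hca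
        (div_pos hr0 two_pos) (div_pos (by linarith) two_pos)
        (div_pos hr0' two_pos) (div_pos (by linarith : (0:ℝ) < 1 - r') two_pos).le hsum
      have hzeq : (r/2) • a + ((1-r)/2) • b + (r'/2) • a' + ((1-r')/2) • b'
          = r • a + (1-r) • b := by
        have h2 : (r/2) • a + ((1-r)/2) • b + (r'/2) • a' + ((1-r')/2) • b'
            = (1/2 : ℝ) • (r • a + (1-r) • b) + (1/2 : ℝ) • (r' • a' + (1-r') • b') := by
          module
        rw [h2, ← heq]
        module
      rw [hzeq] at hq
      exact hFnotint _ hmF hq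
  -- Key 2 : a crossing point cannot lie strictly between two hull points on the line y = c.
  have key2 : ∀ a ∈ A, ∀ b ∈ B, segment ℝ a b ⊆ F → ∀ r : ℝ, 0 < r → r < 1 →
      (r • a + (1-r) • b) 1 = c →
      ∀ u v : EuclideanSpace ℝ (Fin 2), u ∈ H → v ∈ H → u 1 = c → v 1 = c →
      u 0 < (r • a + (1-r) • b) 0 → (r • a + (1-r) • b) 0 < v 0 → False := by
    intro a ha b hb hseg r hr0 hr1 hmc u v huH hvH huc hvc hu hv
    set m : EuclideanSpace ℝ (Fin 2) := r • a + (1-r) • b with hmdef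
    have hmF : m ∈ F := hseg (hsegmem a b r hr0 hr1)
    have haH : a ∈ H := hmemH a (Or.inl ha)
    have hbH : b ∈ H := hmemH b (Or.inr hb)
    have hayb : b 1 < c := hBbelow b hb
    have haya : c < a 1 := hAabove a ha
    have habk : a 1 ≠ b 1 := by linarith
    set t : ℝ := (v 0 - m 0) / (v 0 - u 0) with htdef
    have hvu : 0 < v 0 - u 0 := by linarith
    have ht0 : 0 < t := div_pos (by linarith) hvu
    have ht1 : t < 1 := (div_lt_one hvu).2 (by linarith)
    have hmuv : m = t • u + (1-t) • v := by
      apply bridge_pt_ext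
      · have hvu' : v 0 - u 0 ≠ 0 := ne_of_gt hvu
        have h : t * (v 0 - u 0) = v 0 - m 0 := by
          rw [htdef]; field_simp
        rw [bridge_coord_comb t (1-t) u v]
        nlinarith [h]
      · rw [bridge_coord_comb t (1-t) u v, hmc, huc, hvc]
        ring
    have hncol : ¬ Collinear ℝ ({a, b, u} : Set (EuclideanSpace ℝ (Fin 2))) := by
      intro hcol
      have hab : a ≠ b := hyne a ha b hb
      have huline : u ∈ line[ℝ, a, b] :=
        hcol.mem_affineSpan_of_mem_of_ne (by simp) (by simp) (by simp) hab
      have hmline : m ∈ line[ℝ, a, b] := hlinemem a b r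
      have : u = m := bridge_eq_on_line_of_same_snd habk huline hmline (huc.trans hmc.symm)
      rw [this] at hu
      exact lt_irrefl _ hu
    have hsum : r/2 + (1-r)/2 + t/2 + (1-t)/2 = 1 := by ring
    have hq := bridge_quad_mem_interior hconv haH hbH huH hvH hncol
      (div_pos hr0 two_pos) (div_pos (by linarith) two_pos)
      (div_pos ht0 two_pos) (div_pos (by linarith : (0:ℝ) < 1 - t) two_pos).le hsum
    have hzeq : (r/2) • a + ((1-r)/2) • b + (t/2) • u + ((1-t)/2) • v = m := by
      have h2 : (r/2) • a + ((1-r)/2) • b + (t/2) • u + ((1-t)/2) • v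
          = (1/2 : ℝ) • (r • a + (1-r) • b) + (1/2 : ℝ) • (t • u + (1-t) • v) := by
        module
      rw [h2, ← hmdef, ← hmuv]
      module
    rw [hzeq] at hq
    exact hFnotint _ hmF hq
  -- Now the counting argument.
  by_contra hcon
  -- extract three distinct bridges
  have hne1 : Br.Nonempty := by
    rcases Set.eq_empty_or_nonempty Br with h | h
    · exact absurd (by rw [h, Set.encard_empty]; exact zero_le) hcon
    · exact h
  obtain ⟨p1, hp1⟩ := hne1
  have hne2 : ∃ p2 ∈ Br, p2 ≠ p1 := by
    by_contra h
    push_neg at h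
    have hsub : Br ⊆ {p1} := fun z hz => h z hz
    exact hcon (le_trans (Set.encard_le_encard hsub) (by rw [Set.encard_singleton]; exact one_le_two))
  obtain ⟨p2, hp2, hp21⟩ := hne2
  have hne3 : ∃ p3 ∈ Br, p3 ≠ p1 ∧ p3 ≠ p2 := by
    by_contra h
    push_neg at h
    have hsub : Br ⊆ {p1, p2} := by
      intro z hz
      rcases eq_or_ne z p1 with rfl | hz1
      · exact Or.inl rfl
      · exact Or.inr (h z hz hz1)
    exact hcon (le_trans (Set.encard_le_encard hsub) (Set.encard_pair (Ne.symm hp21)).le)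
  obtain ⟨p3, hp3, hp31, hp32⟩ := hne3
  obtain ⟨ha1, hb1, hseg1⟩ := id hp1
  obtain ⟨ha2, hb2, hseg2⟩ := id hp2
  obtain ⟨ha3, hb3, hseg3⟩ := id hp3
  obtain ⟨r1, hr10, hr11, hm1c⟩ := hcross p1.1 ha1 p1.2 hb1
  obtain ⟨r2, hr20, hr21, hm2c⟩ := hcross p2.1 ha2 p2.2 hb2
  obtain ⟨r3, hr30, hr31, hm3c⟩ := hcross p3.1 ha3 p3.2 hb3
  set m1 : EuclideanSpace ℝ (Fin 2) := r1 • p1.1 + (1-r1) • p1.2 with hm1def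
  set m2 : EuclideanSpace ℝ (Fin 2) := r2 • p2.1 + (1-r2) • p2.2 with hm2def
  set m3 : EuclideanSpace ℝ (Fin 2) := r3 • p3.1 + (1-r3) • p3.2 with hm3def
  have hm1H : m1 ∈ H := hFH (hseg1 (hsegmem _ _ r1 hr10 hr11))
  have hm2H : m2 ∈ H := hFH (hseg2 (hsegmem _ _ r2 hr20 hr21))
  have hm3H : m3 ∈ H := hFH (hseg3 (hsegmem _ _ r3 hr30 hr31))
  -- the crossing points are pairwise distinct
  have hnedistinct : ∀ (p q : EuclideanSpace ℝ (Fin 2) × EuclideanSpace ℝ (Fin 2)),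
      p ∈ Br → q ∈ Br → p ≠ q →
      ∀ r r' : ℝ, 0 < r → r < 1 → 0 < r' → r' < 1 →
      r • p.1 + (1-r) • p.2 ≠ r' • q.1 + (1-r') • q.2 := by
    intro p q hp hq hpq r r' h0 h1 h0' h1' heq
    obtain ⟨hpa, hpb, hpseg⟩ := hp
    obtain ⟨hqa, hqb, hqseg⟩ := hq
    obtain ⟨e1, e2⟩ := key1 p.1 hpa p.2 hpb q.1 hqa q.2 hqb hpseg r r' h0 h1 h0' h1' heq
    exact hpq (Prod.ext e1 e2)
  have h12 : m1 ≠ m2 := hnedistinct p1 p2 hp1 hp2 (Ne.symm hp21) r1 r2 hr10 hr11 hr20 hr21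
  have h13 : m1 ≠ m3 := hnedistinct p1 p3 hp1 hp3 (Ne.symm hp31) r1 r3 hr10 hr11 hr30 hr31
  have h23 : m2 ≠ m3 := hnedistinct p2 p3 hp2 hp3 (Ne.symm hp32) r2 r3 hr20 hr21 hr30 hr31
  -- hence their first coordinates are pairwise distinct
  have hx12 : m1 0 ≠ m2 0 := fun h => h12 (bridge_pt_ext h (hm1c.trans hm2c.symm))
  have hx13 : m1 0 ≠ m3 0 := fun h => h13 (bridge_pt_ext h (hm1c.trans hm3c.symm))
  have hx23 : m2 0 ≠ m3 0 := fun h => h23 (bridge_pt_ext h (hm2c.trans hm3c.symm))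
  -- one of them is strictly between the other two : contradiction via key2
  rcases lt_trichotomy (m1 0) (m2 0) with h12' | h12' | h12'
  · rcases lt_trichotomy (m2 0) (m3 0) with h23' | h23' | h23'
    · exact key2 p2.1 ha2 p2.2 hb2 hseg2 r2 hr20 hr21 hm2c m1 m3 hm1H hm3H hm1c hm3c h12' h23'
    · exact absurd h23' hx23
    · rcases lt_trichotomy (m1 0) (m3 0) with h13' | h13' | h13'
      · exact key2 p3.1 ha3 p3.2 hb3 hseg3 r3 hr30 hr31 hm3c m1 m2 hm1H hm2H hm1c hm2c h13' h23'
      · exact absurd h13' hx13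
      · exact key2 p1.1 ha1 p1.2 hb1 hseg1 r1 hr10 hr11 hm1c m3 m2 hm3H hm2H hm3c hm2c h13' h12'
  · exact absurd h12' hx12
  · rcases lt_trichotomy (m1 0) (m3 0) with h13' | h13' | h13'
    · exact key2 p1.1 ha1 p1.2 hb1 hseg1 r1 hr10 hr11 hm1c m2 m3 hm2H hm3H hm2c hm3c h12' h13'
    · exact absurd h13' hx13
    · rcases lt_trichotomy (m2 0) (m3 0) with h23' | h23' | h23'
      · exact key2 p3.1 ha3 p3.2 hb3 hseg3 r3 hr30 hr31 hm3c m2 m1 hm2H hm1H hm2c hm1c h23' h13'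
      · exact absurd h23' hx23
      · exact key2 p2.1 ha2 p2.2 hb2 hseg2 r2 hr20 hr21 hm2c m3 m1 hm3H hm1H hm3c hm1c h23' h12'
end

section
/- Let A and B be nonempty finite subsets of ℝ² such that A lies strictly above the horizontal line y = c, B lies strictly below it, A ∪ B is in general position, and A ∪ B has at least three points. Then there are exactly two bridges of (A,B), i.e., exactly two pairs (a,b) with a ∈ A and b ∈ B such that the closed segment [a,b] is contained in the frontier of convexHull(A ∪ B). -/
open Set

noncomputable section BridgeAux

namespace BridgeAux

abbrev E2 := EuclideanSpace ℝ (Fin 2)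

lemma e2_ext {x y : E2} (h0 : x 0 = y 0) (h1 : x 1 = y 1) : x = y := by
  ext i
  fin_cases i
  · exact h0
  · exact h1

/-- Signed area / cross product of `b - a` and `s - a`. -/
def sig (a b s : E2) : ℝ := (b 0 - a 0) * (s 1 - a 1) - (b 1 - a 1) * (s 0 - a 0)

/-- x-coordinate where the segment from `a` to `b` crosses the line `y = c`. -/
def xc (c : ℝ) (a b : E2) : ℝ := ((a 1 - c) * b 0 - (b 1 - c) * a 0) / (a 1 - b 1)

lemma sig_swap (a b s : E2) : sig b a s = - sig a b s := by unfold sig; ring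

lemma sig_self_left (a b : E2) : sig a b a = 0 := by unfold sig; ring

lemma sig_self_right (a b : E2) : sig a b b = 0 := by unfold sig; ring

lemma sig_combo (a b x y : E2) {t s : ℝ} (hts : t + s = 1) :
    sig a b (t • x + s • y) = t * sig a b x + s * sig a b y := by
  have hs : s = 1 - t := by linarith
  subst hs
  simp only [sig, PiLp.add_apply, PiLp.smul_apply, smul_eq_mul]
  ring

lemma xdiff (c : ℝ) (a b p q : E2) (hab : a 1 - b 1 ≠ 0) (hpq : p 1 - q 1 ≠ 0) :
    (xc c p q - xc c a b) * ((a 1 - b 1) * (p 1 - q 1)) =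
      (c - q 1) * sig a b p + (p 1 - c) * sig a b q := by
  unfold xc sig
  field_simp
  ring

lemma collinear_of_sig_eq_zero {a b s : E2} (hab : a ≠ b) (h : sig a b s = 0) :
    Collinear ℝ ({a, b, s} : Set E2) := by
  rw [collinear_iff_exists_forall_eq_smul_vadd]
  refine ⟨a, b - a, ?_⟩
  have hd : (b 0 - a 0) ^ 2 + (b 1 - a 1) ^ 2 ≠ 0 := by
    intro hzero
    apply hab
    have h0 : b 0 - a 0 = 0 := by nlinarith [sq_nonneg (b 0 - a 0), sq_nonneg (b 1 - a 1)]
    have h1 : b 1 - a 1 = 0 := by nlinarith [sq_nonneg (b 0 - a 0), sq_nonneg (b 1 - a 1)]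
    exact e2_ext (by linarith) (by linarith)
  intro p hp
  rcases hp with hp | hp | hp
  · exact ⟨0, by simp [hp]⟩
  · exact ⟨1, by simp [hp]⟩
  · refine ⟨((s 0 - a 0) * (b 0 - a 0) + (s 1 - a 1) * (b 1 - a 1)) /
      ((b 0 - a 0) ^ 2 + (b 1 - a 1) ^ 2), ?_⟩
    rw [hp]
    unfold sig at h
    refine e2_ext ?_ ?_ <;>
      simp only [vadd_eq_add, PiLp.add_apply, PiLp.smul_apply, PiLp.sub_apply, smul_eq_mul] <;>
      field_simp
    · linear_combination (-(b 1 - a 1)) * h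
    · linear_combination (b 0 - a 0) * h

lemma convex_sig_nonneg (a b : E2) : Convex ℝ {x : E2 | 0 ≤ sig a b x} := by
  intro x hx y hy t s ht hs hts
  simp only [mem_setOf_eq] at *
  rw [sig_combo a b x y hts]
  nlinarith

lemma hull_subset_halfplane {S : Set E2} {a b : E2} (hpos : ∀ s ∈ S, 0 ≤ sig a b s) :
    convexHull ℝ S ⊆ {x : E2 | 0 ≤ sig a b x} :=
  convexHull_min hpos (convex_sig_nonneg a b)

lemma seg_subset_frontier {S : Set E2} (hfin : S.Finite) {a b : E2} (ha : a ∈ S) (hb : b ∈ S)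
    (hab1 : b 1 - a 1 ≠ 0) (hpos : ∀ s ∈ S, 0 ≤ sig a b s) :
    segment ℝ a b ⊆ frontier (convexHull ℝ S) := by
  have hsub := hull_subset_halfplane hpos
  intro x hx
  obtain ⟨t, s, ht, hs, hts, rfl⟩ := hx
  have hxS : t • a + s • b ∈ convexHull ℝ S :=
    segment_subset_convexHull ha hb ⟨t, s, ht, hs, hts, rfl⟩
  have hsig0 : sig a b (t • a + s • b) = 0 := by
    rw [sig_combo a b a b hts, sig_self_left, sig_self_right]; ring
  rw [frontier, (hfin.isClosed_convexHull ℝ).closure_eq]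
  refine ⟨hxS, fun hint => ?_⟩
  obtain ⟨ε, hε, hball⟩ := Metric.isOpen_iff.mp isOpen_interior _ hint
  set x := t • a + s • b
  set e0 : E2 := EuclideanSpace.single (0 : Fin 2) (1 : ℝ) with he0
  have he0n : ‖e0‖ = 1 := by rw [he0, EuclideanSpace.norm_single]; norm_num
  have hmem : ∀ δ : ℝ, |δ| < ε → x + δ • e0 ∈ convexHull ℝ S := by
    intro δ hδ
    apply interior_subset
    apply hball
    rw [Metric.mem_ball, dist_self_add_left, norm_smul, he0n]
    simpa using hδ
  have hsigd : ∀ δ : ℝ, sig a b (x + δ • e0) = -(b 1 - a 1) * δ := by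
    intro δ
    have h0 : (x + δ • e0) 0 = x 0 + δ := by
      simp [he0, PiLp.add_apply, PiLp.smul_apply, EuclideanSpace.single_apply]
    have h1 : (x + δ • e0) 1 = x 1 := by
      simp [he0, PiLp.add_apply, PiLp.smul_apply, EuclideanSpace.single_apply]
    unfold sig at hsig0 ⊢
    rw [h0, h1]
    linarith [hsig0]
  rcases ne_iff_lt_or_gt.mp hab1 with hlt | hgt
  · have := hsub (hmem (-(ε/2)) (by rw [abs_neg, abs_of_pos (by linarith)]; linarith))
    rw [mem_setOf_eq, hsigd] at this
    nlinarith
  · have := hsub (hmem (ε/2) (by rw [abs_of_pos (by linarith)]; linarith))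
    rw [mem_setOf_eq, hsigd] at this
    nlinarith

lemma pos_or_neg_of_seg_frontier {S : Set E2} (hfin : S.Finite)
    (hspan : affineSpan ℝ S = ⊤) {a b : E2} (ha : a ∈ S) (hb : b ∈ S)
    (hab1 : b 1 - a 1 ≠ 0)
    (hseg : segment ℝ a b ⊆ frontier (convexHull ℝ S)) :
    (∀ s ∈ S, 0 ≤ sig a b s) ∨ (∀ s ∈ S, sig a b s ≤ 0) := by
  set K := convexHull ℝ S with hK
  have hKconv : Convex ℝ K := convex_convexHull ℝ S
  have hKcl : IsClosed K := hfin.isClosed_convexHull ℝ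
  have hint_ne : (interior K).Nonempty := by
    rw [hKconv.interior_nonempty_iff_affineSpan_eq_top, hK, affineSpan_convexHull, hspan]
  set m : E2 := (1/2 : ℝ) • a + (1/2 : ℝ) • b with hm
  have hmseg : m ∈ segment ℝ a b := ⟨1/2, 1/2, by norm_num, by norm_num, by norm_num, rfl⟩
  have hmfr := hseg hmseg
  have hmnotint : m ∉ interior K := by
    rw [frontier] at hmfr; exact hmfr.2
  obtain ⟨f, hf⟩ := geometric_hahn_banach_open_point hKconv.interior isOpen_interior hmnotint
  have hle : ∀ s ∈ K, f s ≤ f m := by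
    intro s hs
    by_contra hgt
    push_neg at hgt
    obtain ⟨z, hz⟩ := hint_ne
    have hfz : f z < f m := hf z hz
    set t : ℝ := (f s - f m) / (2 * (f s - f z)) with hT
    have hfs_fz : 0 < f s - f z := by linarith
    have ht0 : 0 < t := by apply div_pos <;> linarith
    have ht1 : t < 1 := by
      rw [hT, div_lt_one (by linarith)]; linarith
    have hw : (1 - t) • s + t • z ∈ interior K :=
      hKconv.openSegment_closure_interior_subset_interior (subset_closure hs) hz
        ⟨1 - t, t, by linarith, ht0, by ring, rfl⟩
    have hfw := hf _ hw
    rw [map_add, map_smul, map_smul] at hfw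
    simp only [smul_eq_mul] at hfw
    have htv : t * (f s - f z) = (f s - f m) / 2 := by
      rw [hT]; field_simp
    nlinarith
  have hfa : f a ≤ f m := hle a (subset_convexHull ℝ S ha)
  have hfb : f b ≤ f m := hle b (subset_convexHull ℝ S hb)
  have hfm : f m = (1/2) * f a + (1/2) * f b := by
    rw [hm, map_add, map_smul, map_smul]; simp [smul_eq_mul]
  have hfa' : f a = f m := by linarith
  have hfb' : f b = f m := by linarith
  set F0 : ℝ := f (EuclideanSpace.single (0 : Fin 2) (1 : ℝ)) with hF0
  set F1 : ℝ := f (EuclideanSpace.single (1 : Fin 2) (1 : ℝ)) with hF1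
  have hcoord : ∀ x : E2, f x = x 0 * F0 + x 1 * F1 := by
    intro x
    have hx : x = x 0 • EuclideanSpace.single (0 : Fin 2) (1 : ℝ)
        + x 1 • EuclideanSpace.single (1 : Fin 2) (1 : ℝ) := by
      ext i
      fin_cases i <;>
        simp [PiLp.add_apply, PiLp.smul_apply, EuclideanSpace.single_apply]
    conv_lhs => rw [hx]
    rw [map_add, map_smul, map_smul]
    simp [smul_eq_mul, hF0, hF1]
  have hrel : (b 0 - a 0) * F0 + (b 1 - a 1) * F1 = 0 := by
    have : f b = f a := by rw [hfa', hfb']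
    rw [hcoord b, hcoord a] at this
    nlinarith [this]
  set k : ℝ := -F0 / (b 1 - a 1) with hk
  have hkey : ∀ x : E2, f x - f a = k * sig a b x := by
    intro x
    rw [hcoord x, hcoord a, hk]
    unfold sig
    field_simp
    linear_combination (x 1 - a 1) * hrel
  have hknz : k ≠ 0 := by
    obtain ⟨z, hz⟩ := hint_ne
    have hfz : f z < f m := hf z hz
    intro hk0
    have := hkey z
    rw [hk0, zero_mul] at this
    rw [hfa'] at this
    linarith
  rcases hknz.lt_or_gt with hkneg | hkpos
  · left
    intro s hs
    have h1 : f s - f a ≤ 0 := by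
      have := hle s (subset_convexHull ℝ S hs); rw [hfa']; linarith
    rw [hkey s] at h1
    nlinarith
  · right
    intro s hs
    have h1 : f s - f a ≤ 0 := by
      have := hle s (subset_convexHull ℝ S hs); rw [hfa']; linarith
    rw [hkey s] at h1
    nlinarith

lemma span_top_of_noncollinear {S : Set E2} {p q r : E2} (hp : p ∈ S) (hq : q ∈ S) (hr : r ∈ S)
    (hncol : ¬ Collinear ℝ ({p, q, r} : Set E2)) : affineSpan ℝ S = ⊤ := by
  by_contra hne
  apply hncol
  apply Collinear.subset (s₂ := S)
  · intro x hx
    simp only [mem_insert_iff, mem_singleton_iff] at hx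
    rcases hx with rfl | rfl | rfl <;> assumption
  · rw [collinear_iff_rank_le_one]
    have hvne : vectorSpan ℝ S ≠ ⊤ := by
      intro ht
      exact hne
        ((AffineSubspace.affineSpan_eq_top_iff_vectorSpan_eq_top_of_nonempty ℝ _ _ ⟨p, hp⟩).mpr ht)
    have hlt : Module.finrank ℝ (vectorSpan ℝ S) < Module.finrank ℝ E2 :=
      Submodule.finrank_lt hvne
    rw [finrank_euclideanSpace_fin] at hlt
    have h1 : Module.finrank ℝ (vectorSpan ℝ S) ≤ 1 := by omega
    calc Module.rank ℝ (vectorSpan ℝ S) = Module.finrank ℝ (vectorSpan ℝ S) := by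
          rw [Module.finrank_eq_rank]
      _ ≤ 1 := by exact_mod_cast h1

end BridgeAux

end BridgeAux

open BridgeAux in
/-- If `A` lies strictly above the line `y = c`, `B` lies strictly below it,
`A ∪ B` is in general position and has at least three points, then there are
exactly two bridges of `(A, B)`: pairs `(a, b) ∈ A × B` whose segment lies on the
boundary of `convexHull (A ∪ B)`. -/
theorem bridges_eq_two
    (A B : Set (EuclideanSpace ℝ (Fin 2))) (c : ℝ)
    (hAfin : A.Finite) (hBfin : B.Finite)
    (hAne : A.Nonempty) (hBne : B.Nonempty)
    (hAabove : ∀ p ∈ A, c < p 1)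
    (hBbelow : ∀ p ∈ B, p 1 < c)
    (hgen : ∀ p ∈ A ∪ B, ∀ q ∈ A ∪ B, ∀ r ∈ A ∪ B, p ≠ q → q ≠ r → p ≠ r →
      ¬ Collinear ℝ ({p, q, r} : Set (EuclideanSpace ℝ (Fin 2))))
    (hcard : 3 ≤ (A ∪ B).encard) :
    {ab : EuclideanSpace ℝ (Fin 2) × EuclideanSpace ℝ (Fin 2) |
        ab.1 ∈ A ∧ ab.2 ∈ B ∧
          segment ℝ ab.1 ab.2 ⊆ frontier (convexHull ℝ (A ∪ B))}.encard = 2 := by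
  classical
  set S : Set E2 := A ∪ B with hS
  have hSfin : S.Finite := hAfin.union hBfin
  have hyAB : ∀ a ∈ A, ∀ b ∈ B, (0:ℝ) < a 1 - b 1 := by
    intro a ha b hb
    have h1 := hAabove a ha
    have h2 := hBbelow b hb
    linarith
  have hneAB : ∀ a ∈ A, ∀ b ∈ B, a ≠ b := by
    intro a ha b hb h
    have := hyAB a ha b hb
    rw [h] at this
    linarith
  have hstrict : ∀ a ∈ A, ∀ b ∈ B, ∀ s ∈ S, s ≠ a → s ≠ b → sig a b s ≠ 0 := by
    intro a ha b hb s hs hsa hsb h0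
    have hab : a ≠ b := hneAB a ha b hb
    exact hgen a (Or.inl ha) b (Or.inr hb) s hs hab (Ne.symm hsb) (Ne.symm hsa)
      (collinear_of_sig_eq_zero hab h0)
  have hPfin : (A ×ˢ B).Finite := hAfin.prod hBfin
  have hPne : (A ×ˢ B).Nonempty := hAne.prod hBne
  obtain ⟨u, huP, humin⟩ :=
    Set.exists_min_image (A ×ˢ B) (fun ab => xc c ab.1 ab.2) hPfin hPne
  obtain ⟨v, hvP, hvmax⟩ :=
    Set.exists_max_image (A ×ˢ B) (fun ab => xc c ab.1 ab.2) hPfin hPne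
  rw [Set.mem_prod] at huP hvP
  obtain ⟨hu1, hu2⟩ := huP
  obtain ⟨hv1, hv2⟩ := hvP
  -- the minimizing pair has everything on the nonnegative side
  have hpos : ∀ s ∈ S, 0 ≤ sig u.1 u.2 s := by
    intro s hs
    by_contra hneg
    push_neg at hneg
    rcases hs with hsA | hsB
    · have hd := xdiff c u.1 u.2 s u.2 (ne_of_gt (hyAB _ hu1 _ hu2))
        (ne_of_gt (hyAB _ hsA _ hu2))
      rw [sig_self_right] at hd
      have hmin := humin (s, u.2) (Set.mk_mem_prod hsA hu2)
      simp only at hmin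
      have hXd : 0 ≤ xc c s u.2 - xc c u.1 u.2 := by linarith
      have hD : 0 < (u.1 1 - u.2 1) * (s 1 - u.2 1) :=
        mul_pos (hyAB _ hu1 _ hu2) (hyAB _ hsA _ hu2)
      have hcu : 0 < c - u.2 1 := by have := hBbelow _ hu2; linarith
      nlinarith [mul_nonneg hXd hD.le, mul_pos hcu (show 0 < -sig u.1 u.2 s by linarith)]
    · have hd := xdiff c u.1 u.2 u.1 s (ne_of_gt (hyAB _ hu1 _ hu2))
        (ne_of_gt (hyAB _ hu1 _ hsB))
      rw [sig_self_left] at hd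
      have hmin := humin (u.1, s) (Set.mk_mem_prod hu1 hsB)
      simp only at hmin
      have hXd : 0 ≤ xc c u.1 s - xc c u.1 u.2 := by linarith
      have hD : 0 < (u.1 1 - u.2 1) * (u.1 1 - s 1) :=
        mul_pos (hyAB _ hu1 _ hu2) (hyAB _ hu1 _ hsB)
      have hcu : 0 < u.1 1 - c := by have := hAabove _ hu1; linarith
      nlinarith [mul_nonneg hXd hD.le, mul_pos hcu (show 0 < -sig u.1 u.2 s by linarith)]
  -- the maximizing pair has everything on the nonpositive side
  have hneg : ∀ s ∈ S, sig v.1 v.2 s ≤ 0 := by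
    intro s hs
    by_contra hposv
    push_neg at hposv
    rcases hs with hsA | hsB
    · have hd := xdiff c v.1 v.2 s v.2 (ne_of_gt (hyAB _ hv1 _ hv2))
        (ne_of_gt (hyAB _ hsA _ hv2))
      rw [sig_self_right] at hd
      have hmax := hvmax (s, v.2) (Set.mk_mem_prod hsA hv2)
      simp only at hmax
      have hXd : xc c s v.2 - xc c v.1 v.2 ≤ 0 := by linarith
      have hD : 0 < (v.1 1 - v.2 1) * (s 1 - v.2 1) :=
        mul_pos (hyAB _ hv1 _ hv2) (hyAB _ hsA _ hv2)
      have hcu : 0 < c - v.2 1 := by have := hBbelow _ hv2; linarith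
      nlinarith [mul_nonpos_of_nonpos_of_nonneg hXd hD.le, mul_pos hcu hposv]
    · have hd := xdiff c v.1 v.2 v.1 s (ne_of_gt (hyAB _ hv1 _ hv2))
        (ne_of_gt (hyAB _ hv1 _ hsB))
      rw [sig_self_left] at hd
      have hmax := hvmax (v.1, s) (Set.mk_mem_prod hv1 hsB)
      simp only at hmax
      have hXd : xc c v.1 s - xc c v.1 v.2 ≤ 0 := by linarith
      have hD : 0 < (v.1 1 - v.2 1) * (v.1 1 - s 1) :=
        mul_pos (hyAB _ hv1 _ hv2) (hyAB _ hv1 _ hsB)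
      have hcu : 0 < v.1 1 - c := by have := hAabove _ hv1; linarith
      nlinarith [mul_nonpos_of_nonpos_of_nonneg hXd hD.le, mul_pos hcu hposv]
  -- uniqueness of the "positive" pair
  have huniqP : ∀ pq : E2 × E2, pq.1 ∈ A → pq.2 ∈ B → (∀ s ∈ S, 0 ≤ sig pq.1 pq.2 s) →
      pq = u := by
    intro pq hp hq hposP
    by_contra hne
    have hcases : pq.1 ≠ u.1 ∨ pq.2 ≠ u.2 := by
      by_contra h
      push_neg at h
      exact hne (Prod.ext h.1 h.2)
    have hcu2 : 0 < c - u.2 1 := by have := hBbelow _ hu2; linarith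
    have hcq : 0 < c - pq.2 1 := by have := hBbelow _ hq; linarith
    have hpu1 : 0 < pq.1 1 - c := by have := hAabove _ hp; linarith
    have hu1c : 0 < u.1 1 - c := by have := hAabove _ hu1; linarith
    have hQ1 : 0 < (c - pq.2 1) * sig u.1 u.2 pq.1 + (pq.1 1 - c) * sig u.1 u.2 pq.2 := by
      have hs1 : 0 ≤ sig u.1 u.2 pq.1 := hpos pq.1 (Or.inl hp)
      have hs2 : 0 ≤ sig u.1 u.2 pq.2 := hpos pq.2 (Or.inr hq)
      rcases hcases with h | h
      · have : sig u.1 u.2 pq.1 ≠ 0 :=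
          hstrict u.1 hu1 u.2 hu2 pq.1 (Or.inl hp) h (hneAB pq.1 hp u.2 hu2)
        nlinarith [mul_pos hcq (lt_of_le_of_ne hs1 (Ne.symm this)),
          mul_nonneg hpu1.le hs2]
      · have : sig u.1 u.2 pq.2 ≠ 0 :=
          hstrict u.1 hu1 u.2 hu2 pq.2 (Or.inr hq) (Ne.symm (hneAB u.1 hu1 pq.2 hq)) h
        nlinarith [mul_pos hpu1 (lt_of_le_of_ne hs2 (Ne.symm this)),
          mul_nonneg hcq.le hs1]
    have hQ2 : 0 < (c - u.2 1) * sig pq.1 pq.2 u.1 + (u.1 1 - c) * sig pq.1 pq.2 u.2 := by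
      have hs1 : 0 ≤ sig pq.1 pq.2 u.1 := hposP u.1 (Or.inl hu1)
      have hs2 : 0 ≤ sig pq.1 pq.2 u.2 := hposP u.2 (Or.inr hu2)
      rcases hcases with h | h
      · have : sig pq.1 pq.2 u.1 ≠ 0 :=
          hstrict pq.1 hp pq.2 hq u.1 (Or.inl hu1) (Ne.symm h) (hneAB u.1 hu1 pq.2 hq)
        nlinarith [mul_pos hcu2 (lt_of_le_of_ne hs1 (Ne.symm this)),
          mul_nonneg hu1c.le hs2]
      · have : sig pq.1 pq.2 u.2 ≠ 0 :=
          hstrict pq.1 hp pq.2 hq u.2 (Or.inr hu2) (Ne.symm (hneAB pq.1 hp u.2 hu2)) (Ne.symm h)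
        nlinarith [mul_pos hu1c (lt_of_le_of_ne hs2 (Ne.symm this)),
          mul_nonneg hcu2.le hs1]
    have hd1 := xdiff c u.1 u.2 pq.1 pq.2 (ne_of_gt (hyAB _ hu1 _ hu2))
      (ne_of_gt (hyAB _ hp _ hq))
    have hd2 := xdiff c pq.1 pq.2 u.1 u.2 (ne_of_gt (hyAB _ hp _ hq))
      (ne_of_gt (hyAB _ hu1 _ hu2))
    have hsum : ((c - pq.2 1) * sig u.1 u.2 pq.1 + (pq.1 1 - c) * sig u.1 u.2 pq.2)
        + ((c - u.2 1) * sig pq.1 pq.2 u.1 + (u.1 1 - c) * sig pq.1 pq.2 u.2) = 0 := by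
      linear_combination -hd1 - hd2
    linarith
  -- uniqueness of the "negative" pair
  have huniqN : ∀ pq : E2 × E2, pq.1 ∈ A → pq.2 ∈ B → (∀ s ∈ S, sig pq.1 pq.2 s ≤ 0) →
      pq = v := by
    intro pq hp hq hnegP
    by_contra hne
    have hcases : pq.1 ≠ v.1 ∨ pq.2 ≠ v.2 := by
      by_contra h
      push_neg at h
      exact hne (Prod.ext h.1 h.2)
    have hcv2 : 0 < c - v.2 1 := by have := hBbelow _ hv2; linarith
    have hcq : 0 < c - pq.2 1 := by have := hBbelow _ hq; linarith
    have hpv1 : 0 < pq.1 1 - c := by have := hAabove _ hp; linarith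
    have hv1c : 0 < v.1 1 - c := by have := hAabove _ hv1; linarith
    have hQ1 : (c - pq.2 1) * sig v.1 v.2 pq.1 + (pq.1 1 - c) * sig v.1 v.2 pq.2 < 0 := by
      have hs1 : sig v.1 v.2 pq.1 ≤ 0 := hneg pq.1 (Or.inl hp)
      have hs2 : sig v.1 v.2 pq.2 ≤ 0 := hneg pq.2 (Or.inr hq)
      rcases hcases with h | h
      · have : sig v.1 v.2 pq.1 ≠ 0 :=
          hstrict v.1 hv1 v.2 hv2 pq.1 (Or.inl hp) h (hneAB pq.1 hp v.2 hv2)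
        nlinarith [mul_pos hcq (show 0 < -sig v.1 v.2 pq.1 from by
          rcases lt_or_eq_of_le hs1 with h' | h'
          · linarith
          · exact absurd h' this), mul_nonneg hpv1.le (neg_nonneg.mpr hs2)]
      · have : sig v.1 v.2 pq.2 ≠ 0 :=
          hstrict v.1 hv1 v.2 hv2 pq.2 (Or.inr hq) (Ne.symm (hneAB v.1 hv1 pq.2 hq)) h
        nlinarith [mul_pos hpv1 (show 0 < -sig v.1 v.2 pq.2 from by
          rcases lt_or_eq_of_le hs2 with h' | h'
          · linarith
          · exact absurd h' this), mul_nonneg hcq.le (neg_nonneg.mpr hs1)]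
    have hQ2 : (c - v.2 1) * sig pq.1 pq.2 v.1 + (v.1 1 - c) * sig pq.1 pq.2 v.2 < 0 := by
      have hs1 : sig pq.1 pq.2 v.1 ≤ 0 := hnegP v.1 (Or.inl hv1)
      have hs2 : sig pq.1 pq.2 v.2 ≤ 0 := hnegP v.2 (Or.inr hv2)
      rcases hcases with h | h
      · have : sig pq.1 pq.2 v.1 ≠ 0 :=
          hstrict pq.1 hp pq.2 hq v.1 (Or.inl hv1) (Ne.symm h) (hneAB v.1 hv1 pq.2 hq)
        nlinarith [mul_pos hcv2 (show 0 < -sig pq.1 pq.2 v.1 from by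
          rcases lt_or_eq_of_le hs1 with h' | h'
          · linarith
          · exact absurd h' this), mul_nonneg hv1c.le (neg_nonneg.mpr hs2)]
      · have : sig pq.1 pq.2 v.2 ≠ 0 :=
          hstrict pq.1 hp pq.2 hq v.2 (Or.inr hv2) (Ne.symm (hneAB pq.1 hp v.2 hv2)) (Ne.symm h)
        nlinarith [mul_pos hv1c (show 0 < -sig pq.1 pq.2 v.2 from by
          rcases lt_or_eq_of_le hs2 with h' | h'
          · linarith
          · exact absurd h' this), mul_nonneg hcv2.le (neg_nonneg.mpr hs1)]
    have hd1 := xdiff c v.1 v.2 pq.1 pq.2 (ne_of_gt (hyAB _ hv1 _ hv2))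
      (ne_of_gt (hyAB _ hp _ hq))
    have hd2 := xdiff c pq.1 pq.2 v.1 v.2 (ne_of_gt (hyAB _ hp _ hq))
      (ne_of_gt (hyAB _ hv1 _ hv2))
    have hsum : ((c - pq.2 1) * sig v.1 v.2 pq.1 + (pq.1 1 - c) * sig v.1 v.2 pq.2)
        + ((c - v.2 1) * sig pq.1 pq.2 v.1 + (v.1 1 - c) * sig pq.1 pq.2 v.2) = 0 := by
      linear_combination -hd1 - hd2
    linarith
  -- a third point of S distinct from u.1 and u.2
  have hex3 : ∃ s ∈ S, s ≠ u.1 ∧ s ≠ u.2 := by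
    have hsub : ¬ (S ⊆ {u.1, u.2}) := by
      intro hsub
      have h1 := Set.encard_mono hsub
      have h2 : ({u.1, u.2} : Set E2).encard ≤ 2 := by
        calc ({u.1, u.2} : Set E2).encard ≤ ({u.2} : Set E2).encard + 1 :=
              Set.encard_insert_le _ _
          _ = 2 := by rw [Set.encard_singleton]; rfl
      have h3 : (3 : ℕ∞) ≤ 2 := le_trans hcard (le_trans h1 h2)
      norm_num at h3
    obtain ⟨s, hsS, hsnot⟩ := not_subset.mp hsub
    simp only [mem_insert_iff, mem_singleton_iff, not_or] at hsnot
    exact ⟨s, hsS, hsnot.1, hsnot.2⟩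
  obtain ⟨w, hwS, hw1, hw2⟩ := hex3
  have hspan : affineSpan ℝ S = ⊤ := by
    refine span_top_of_noncollinear (Or.inl hu1) (Or.inr hu2) hwS ?_
    exact hgen u.1 (Or.inl hu1) u.2 (Or.inr hu2) w hwS (hneAB u.1 hu1 u.2 hu2)
      (Ne.symm hw2) (Ne.symm hw1)
  have hunv : u ≠ v := by
    intro h
    have h1 := hpos w hwS
    have h2 := hneg w hwS
    rw [← h] at h2
    have := hstrict u.1 hu1 u.2 hu2 w hwS hw1 hw2
    have : sig u.1 u.2 w = 0 := le_antisymm h2 h1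
    exact hstrict u.1 hu1 u.2 hu2 w hwS hw1 hw2 this
  -- the bridge set equals {u, v}
  have hset : {ab : E2 × E2 | ab.1 ∈ A ∧ ab.2 ∈ B ∧
      segment ℝ ab.1 ab.2 ⊆ frontier (convexHull ℝ S)} = {u, v} := by
    ext ab
    simp only [mem_setOf_eq, mem_insert_iff, mem_singleton_iff]
    constructor
    · rintro ⟨haA, hbB, hseg⟩
      have h1ne : ab.2 1 - ab.1 1 ≠ 0 := by
        have := hyAB ab.1 haA ab.2 hbB; intro h; linarith
      rcases pos_or_neg_of_seg_frontier hSfin hspan (Or.inl haA) (Or.inr hbB) h1ne hseg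
        with hp | hn
      · left; exact huniqP ab haA hbB hp
      · right; exact huniqN ab haA hbB hn
    · rintro (h | h) <;> rw [h]
      · refine ⟨hu1, hu2, ?_⟩
        refine seg_subset_frontier hSfin (Or.inl hu1) (Or.inr hu2) ?_ hpos
        have := hyAB u.1 hu1 u.2 hu2; intro h; linarith
      · refine ⟨hv1, hv2, ?_⟩
        rw [segment_symm]
        refine seg_subset_frontier hSfin (Or.inr hv2) (Or.inl hv1) ?_ ?_
        · have := hyAB v.1 hv1 v.2 hv2; intro h; linarith
        · intro s hs
          rw [sig_swap]
          linarith [hneg s hs]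
  rw [hset]
  exact Set.encard_pair hunv
end

section
/- Let A and B be nonempty finite subsets of ℝ² such that A lies strictly above the horizontal line y = c, B lies strictly below it, and A ∪ B is in general position. If a ∈ A, b ∈ B, and the closed segment [a,b] is contained in the frontier of convexHull(A ∪ B), then a is an extreme point of convexHull(A) and b is an extreme point of convexHull(B). -/
open Set

set_option maxHeartbeats 1000000 in
private lemma aux_extreme
    {A B : Set (EuclideanSpace ℝ (Fin 2))}
    (hAfin : A.Finite)
    (hgen : ∀ p ∈ A ∪ B, ∀ q ∈ A ∪ B, ∀ r ∈ A ∪ B, p ≠ q → q ≠ r → p ≠ r →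
      ¬ Collinear ℝ ({p, q, r} : Set (EuclideanSpace ℝ (Fin 2))))
    (hAB : ∀ p ∈ A, ∀ q ∈ B, p ≠ q)
    {a b : EuclideanSpace ℝ (Fin 2)} (ha : a ∈ A) (hb : b ∈ B)
    (hseg : segment ℝ a b ⊆ frontier (convexHull ℝ (A ∪ B))) :
    a ∈ Set.extremePoints ℝ (convexHull ℝ A) := by
  classical
  by_contra hnot
  set K := convexHull ℝ (A ∪ B) with hK_def
  have hKconv : Convex ℝ K := convex_convexHull ℝ _
  have hab : a ≠ b := hAB a ha b hb
  -- Step 1: `a` lies in the convex hull of `A \ {a}`.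
  have hcomp : IsCompact (convexHull ℝ A) := (hAfin.isCompact_convexHull ℝ)
  have hKM := closure_convexHull_extremePoints hcomp (convex_convexHull ℝ A)
  have hsub : (convexHull ℝ A).extremePoints ℝ ⊆ A \ {a} := by
    intro x hx
    refine ⟨extremePoints_convexHull_subset hx, ?_⟩
    intro hxa
    rw [Set.mem_singleton_iff] at hxa
    exact hnot (hxa ▸ hx)
  have haA' : a ∈ convexHull ℝ (A \ {a}) := by
    have h1 : a ∈ closure (convexHull ℝ ((convexHull ℝ A).extremePoints ℝ)) := by
      rw [hKM]; exact subset_convexHull ℝ A ha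
    have h2 : closure (convexHull ℝ ((convexHull ℝ A).extremePoints ℝ)) ⊆
        closure (convexHull ℝ (A \ {a})) := closure_mono (convexHull_mono hsub)
    have h3 : IsClosed (convexHull ℝ (A \ {a})) :=
      ((hAfin.subset Set.diff_subset).isCompact_convexHull ℝ).isClosed
    exact h3.closure_eq ▸ h2 h1
  -- Step 2: extract a representation `a = t • z + (1-t) • w'` with `z ∈ A \ {a}`.
  set s : Finset (EuclideanSpace ℝ (Fin 2)) := (hAfin.subset Set.diff_subset).toFinset with hs_def
  have hcoe : (s : Set (EuclideanSpace ℝ (Fin 2))) = A \ {a} := Set.Finite.coe_toFinset _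
  rw [← hcoe, Finset.convexHull_eq] at haA'
  obtain ⟨w, hw0, hw1, hwa⟩ := haA'
  obtain ⟨z, hzs, hz0⟩ : ∃ z ∈ s, 0 < w z := by
    rcases Finset.exists_lt_of_sum_lt (f := fun _ => (0:ℝ)) (g := w)
        (by rw [hw1]; simp) with ⟨i, hi, hlt⟩
    exact ⟨i, hi, hlt⟩
  have hz_mem : z ∈ A \ {a} := by rw [← hcoe]; exact_mod_cast hzs
  have hzA : z ∈ A := hz_mem.1
  have hza : z ≠ a := by simpa using hz_mem.2
  set t := w z with ht_def
  have hasum : ∑ y ∈ s, w y • y = a := by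
    rw [← hwa, Finset.centerMass_eq_of_sum_1 s id hw1]
    simp
  have hsplit : w z • z + ∑ y ∈ s.erase z, w y • y = a := by
    rw [Finset.add_sum_erase s (fun y => w y • y) hzs]; exact hasum
  have hsum_rest : ∑ y ∈ s.erase z, w y = 1 - t := by
    have := Finset.add_sum_erase s w hzs
    rw [hw1] at this; linarith
  have ht_le : t ≤ 1 := by
    rw [← hw1]
    exact Finset.single_le_sum (fun i hi => hw0 i hi) hzs
  rcases eq_or_lt_of_le ht_le with ht1 | ht1
  · -- degenerate case: `a = z`, contradiction
    have hrest0 : ∀ y ∈ s.erase z, w y = 0 := by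
      intro y hy
      have hnn : ∀ y ∈ s.erase z, 0 ≤ w y :=
        fun y hy => hw0 y (Finset.mem_of_mem_erase hy)
      have : ∑ y ∈ s.erase z, w y = 0 := by rw [hsum_rest, ← ht1]; ring
      exact (Finset.sum_eq_zero_iff_of_nonneg hnn).1 this y hy
    have : a = z := by
      rw [← hsplit, Finset.sum_eq_zero (fun y hy => by rw [hrest0 y hy, zero_smul]),
        add_zero, ← ht_def, ht1, one_smul]
    exact hza this.symm
  -- main case : 0 < 1 - t
  have hT : (0:ℝ) < 1 - t := by linarith
  set w' := (s.erase z).centerMass w id with hw'_def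
  have hw'mem : w' ∈ convexHull ℝ (A \ {a}) := by
    refine Finset.centerMass_mem_convexHull _
      (fun i hi => hw0 i (Finset.mem_of_mem_erase hi)) (by rw [hsum_rest]; exact hT) ?_
    intro i hi
    have : i ∈ s := Finset.mem_of_mem_erase hi
    rw [← hcoe]; exact_mod_cast this
  have ha_rep : t • z + (1 - t) • w' = a := by
    have h1 : (1 - t) • w' = ∑ y ∈ s.erase z, w y • y := by
      rw [hw'_def, Finset.centerMass, hsum_rest, smul_inv_smul₀ (by linarith : (1:ℝ) - t ≠ 0)]
      simp
    rw [← ht_def] at hsplit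
    rw [h1]
    exact hsplit
  -- points
  have hzK : z ∈ K := subset_convexHull ℝ _ (Or.inl hzA)
  have haK : a ∈ K := subset_convexHull ℝ _ (Or.inl ha)
  have hbK : b ∈ K := subset_convexHull ℝ _ (Or.inr hb)
  have hw'K : w' ∈ K := convexHull_mono (fun x hx => Or.inl hx.1) hw'mem
  set u := (2:ℝ)⁻¹ • z + (2:ℝ)⁻¹ • b with hu
  set v := (2:ℝ)⁻¹ • w' + (2:ℝ)⁻¹ • b with hv
  set m := (2:ℝ)⁻¹ • a + (2:ℝ)⁻¹ • b with hm
  have huK : u ∈ K := hKconv hzK hbK (by norm_num) (by norm_num) (by norm_num)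
  have hvK : v ∈ K := hKconv hw'K hbK (by norm_num) (by norm_num) (by norm_num)
  have hm_front : m ∈ frontier K :=
    hseg ⟨(2:ℝ)⁻¹, (2:ℝ)⁻¹, by norm_num, by norm_num, by norm_num, rfl⟩
  have hm_uv : t • u + (1 - t) • v = m := by
    rw [hu, hv, hm]
    linear_combination (norm := module) ((2:ℝ)⁻¹) • ha_rep
  have hzab_notcol : ¬ Collinear ℝ ({z, a, b} : Set (EuclideanSpace ℝ (Fin 2))) :=
    hgen z (Or.inl hzA) a (Or.inl ha) b (Or.inr hb) hza hab (hAB z hzA b hb)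
  have huv_ne : u ≠ v := by
    intro h
    have hzw : z = w' := by
      rw [hu, hv] at h
      linear_combination (norm := module) (2:ℝ) • h
    have hwa' : w' = a := by
      rw [← ha_rep, hzw]
      module
    exact hza (hzw.trans hwa')
  have hcol_contr : ¬ Collinear ℝ ({u, v, a} : Set (EuclideanSpace ℝ (Fin 2))) := by
    intro hcol
    have haM : a ∈ line[ℝ, u, v] :=
      hcol.mem_affineSpan_of_mem_of_ne (by simp) (by simp) (by simp) huv_ne
    have huM : u ∈ line[ℝ, u, v] := subset_affineSpan ℝ _ (by simp)
    have hvM : v ∈ line[ℝ, u, v] := subset_affineSpan ℝ _ (by simp)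
    have hmM : m ∈ line[ℝ, u, v] := by
      have h1 := (line[ℝ, u, v]).smul_vsub_vadd_mem t huM hvM hvM
      have h2 : t • (u -ᵥ v) +ᵥ v = m := by
        rw [← hm_uv]
        simp only [vsub_eq_sub, vadd_eq_add]
        module
      rwa [h2] at h1
    have hbM : b ∈ line[ℝ, u, v] := by
      have h1 := (line[ℝ, u, v]).smul_vsub_vadd_mem (2:ℝ) hmM haM haM
      have h2 : (2:ℝ) • (m -ᵥ a) +ᵥ a = b := by
        rw [hm]
        simp only [vsub_eq_sub, vadd_eq_add]
        module
      rwa [h2] at h1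
    have hzM : z ∈ line[ℝ, u, v] := by
      have h1 := (line[ℝ, u, v]).smul_vsub_vadd_mem (2:ℝ) huM hbM hbM
      have h2 : (2:ℝ) • (u -ᵥ b) +ᵥ b = z := by
        rw [hu]
        simp only [vsub_eq_sub, vadd_eq_add]
        module
      rwa [h2] at h1
    have h1 : Collinear ℝ ({u, v} : Set (EuclideanSpace ℝ (Fin 2))) := collinear_pair ℝ u v
    have h2 : Collinear ℝ (insert b ({u, v} : Set (EuclideanSpace ℝ (Fin 2)))) :=
      (collinear_insert_iff_of_mem_affineSpan hbM).2 h1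
    have h3 : Collinear ℝ (insert a (insert b ({u, v} : Set (EuclideanSpace ℝ (Fin 2))))) :=
      (collinear_insert_iff_of_mem_affineSpan
        (affineSpan_mono ℝ (Set.subset_insert _ _) haM)).2 h2
    have h4 : Collinear ℝ (insert z (insert a (insert b
        ({u, v} : Set (EuclideanSpace ℝ (Fin 2)))))) :=
      (collinear_insert_iff_of_mem_affineSpan
        (affineSpan_mono ℝ ((Set.subset_insert _ _).trans (Set.subset_insert _ _)) hzM)).2 h3
    refine hzab_notcol (h4.subset ?_)
    intro x hx
    simp only [Set.mem_insert_iff, Set.mem_singleton_iff] at hx ⊢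
    tauto
  -- the triangle u v a is an affine basis
  have hind : AffineIndependent ℝ ![u, v, a] :=
    affineIndependent_iff_not_collinear_set.2 hcol_contr
  have htop : affineSpan ℝ (Set.range ![u, v, a]) = ⊤ :=
    hind.affineSpan_eq_top_iff_card_eq_finrank_add_one.2 (by simp)
  let bb : AffineBasis (Fin 3) ℝ (EuclideanSpace ℝ (Fin 2)) := ⟨![u, v, a], hind, htop⟩
  set q := Finset.univ.affineCombination ℝ (bb : Fin 3 → EuclideanSpace ℝ (Fin 2))
      (fun _ => (3:ℝ)⁻¹) with hq
  have hbbfun : (bb : Fin 3 → EuclideanSpace ℝ (Fin 2)) = ![u, v, a] := rfl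
  have hq_int : q ∈ interior K := by
    have h1 : q ∈ interior (convexHull ℝ
        (Set.range (bb : Fin 3 → EuclideanSpace ℝ (Fin 2)))) := by
      rw [AffineBasis.interior_convexHull]
      intro i
      rw [hq, bb.coord_apply_combination_of_mem (Finset.mem_univ i) (by simp)]
      norm_num
    refine interior_mono (convexHull_min ?_ hKconv) h1
    rintro x ⟨i, rfl⟩
    rw [hbbfun]
    fin_cases i
    · exact huK
    · exact hvK
    · exact haK
  have hq_eq : q = (3:ℝ)⁻¹ • u + (3:ℝ)⁻¹ • v + (3:ℝ)⁻¹ • a := by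
    rw [hq, Finset.affineCombination_eq_linear_combination _ _ _ (by simp), hbbfun]
    simp [Fin.sum_univ_three]
  -- produce an interior point on the segment
  set δ : ℝ := min (min (t / 2) ((1 - t) / 2)) (4:ℝ)⁻¹ with hδ
  have hδ0 : 0 < δ := lt_min (lt_min (by linarith) (by linarith)) (by norm_num)
  have hδt : δ ≤ t / 2 := (min_le_left _ _).trans (min_le_left _ _)
  have hδt' : δ ≤ (1 - t) / 2 := (min_le_left _ _).trans (min_le_right _ _)
  have hδ4 : δ ≤ (4:ℝ)⁻¹ := min_le_right _ _
  have h3δ : 3 * δ < 1 := by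
    have : δ ≤ (4:ℝ)⁻¹ := hδ4
    norm_num at this ⊢
    linarith
  have h3δ' : (1:ℝ) - 3 * δ ≠ 0 := by linarith
  set r := (1 - 3*δ)⁻¹ • ((t/2 - δ) • u + ((1-t)/2 - δ) • v + ((4:ℝ)⁻¹ - δ) • a
      + (4:ℝ)⁻¹ • b) with hr
  have hrK : r ∈ K := by
    have hsum := hKconv.sum_mem (t := (Finset.univ : Finset (Fin 4)))
      (w := ![(t/2 - δ)/(1-3*δ), ((1-t)/2 - δ)/(1-3*δ), ((4:ℝ)⁻¹ - δ)/(1-3*δ),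
        (4:ℝ)⁻¹/(1-3*δ)])
      (z := ![u, v, a, b]) ?_ ?_ ?_
    · have hre : r = ∑ i : Fin 4, (![(t/2 - δ)/(1-3*δ), ((1-t)/2 - δ)/(1-3*δ),
          ((4:ℝ)⁻¹ - δ)/(1-3*δ), (4:ℝ)⁻¹/(1-3*δ)]) i • (![u, v, a, b]) i := by
        rw [hr]
        simp only [Fin.sum_univ_four, Matrix.cons_val_zero, Matrix.cons_val_one,
          Matrix.head_cons, Matrix.cons_val_two, Matrix.tail_cons, Matrix.cons_val_three]
        match_scalars <;> ring
      rw [hre]; exact hsum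
    · intro i _
      fin_cases i <;>
        simp only [Matrix.cons_val_zero, Matrix.cons_val_one, Matrix.head_cons,
          Matrix.cons_val_two, Matrix.tail_cons, Matrix.cons_val_three] <;>
        apply div_nonneg <;> first | linarith | norm_num
    · simp only [Fin.sum_univ_four, Matrix.cons_val_zero, Matrix.cons_val_one,
        Matrix.head_cons, Matrix.cons_val_two, Matrix.tail_cons, Matrix.cons_val_three]
      rw [← add_div, ← add_div, ← add_div, div_eq_one_iff_eq h3δ']
      ring
    · intro i _
      fin_cases i
      · exact huK
      · exact hvK
      · exact haK
      · exact hbK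
  have hm_uv' : t • u + (1 - t) • v = (2:ℝ)⁻¹ • a + (2:ℝ)⁻¹ • b := hm_uv.trans hm
  have hfinal : (3*δ) • q + (1 - 3*δ) • r = m := by
    rw [hq_eq, hr, smul_inv_smul₀ h3δ', hm]
    linear_combination (norm := module) ((2:ℝ)⁻¹) • hm_uv'
  have hm_int : m ∈ interior K := by
    rw [← hfinal]
    exact hKconv.combo_interior_closure_mem_interior hq_int (subset_closure hrK)
      (by positivity) (by linarith) (by ring)
  exact Set.disjoint_left.mp disjoint_interior_frontier hm_int hm_front

/-- If `A` lies strictly above the line `y = c`, `B` lies strictly below it, and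
`A ∪ B` is in general position, then each endpoint of a bridge of `(A, B)` is an
extreme point of the convex hull of its own side. -/
theorem bridge_endpoints_extreme
    (A B : Set (EuclideanSpace ℝ (Fin 2))) (c : ℝ)
    (hAfin : A.Finite) (hBfin : B.Finite)
    (hAne : A.Nonempty) (hBne : B.Nonempty)
    (hAabove : ∀ p ∈ A, c < p 1)
    (hBbelow : ∀ p ∈ B, p 1 < c)
    (hgen : ∀ p ∈ A ∪ B, ∀ q ∈ A ∪ B, ∀ r ∈ A ∪ B, p ≠ q → q ≠ r → p ≠ r →
      ¬ Collinear ℝ ({p, q, r} : Set (EuclideanSpace ℝ (Fin 2))))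
    (a b : EuclideanSpace ℝ (Fin 2)) (ha : a ∈ A) (hb : b ∈ B)
    (hseg : segment ℝ a b ⊆ frontier (convexHull ℝ (A ∪ B))) :
    a ∈ Set.extremePoints ℝ (convexHull ℝ A) ∧
      b ∈ Set.extremePoints ℝ (convexHull ℝ B) := by
  have hAB : ∀ p ∈ A, ∀ q ∈ B, p ≠ q := by
    intro p hp q hq h
    have h1 := hAabove p hp
    have h2 := hBbelow q hq
    rw [h] at h1
    linarith
  constructor
  · exact aux_extreme hAfin hgen hAB ha hb hseg
  · have hgen' : ∀ p ∈ B ∪ A, ∀ q ∈ B ∪ A, ∀ r ∈ B ∪ A, p ≠ q → q ≠ r → p ≠ r →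
        ¬ Collinear ℝ ({p, q, r} : Set (EuclideanSpace ℝ (Fin 2))) := by
      rw [Set.union_comm B A]; exact hgen
    have hseg' : segment ℝ b a ⊆ frontier (convexHull ℝ (B ∪ A)) := by
      rw [segment_symm, Set.union_comm B A]; exact hseg
    exact aux_extreme hBfin hgen' (fun p hp q hq => (hAB q hq p hp).symm) hb ha hseg'
end

section
/- Let K₁ and K₂ be nonempty compact convex subsets of ℝ² such that convexHull(K₁ ∪ K₂) has nonempty interior. Then every point x of the frontier of convexHull(K₁ ∪ K₂) satisfies at least one of the following: x lies in the frontier of K₁; x lies in the frontier of K₂; or there exist p ∈ K₁ and q ∈ K₂ such that x lies on the closed segment [p,q] and [p,q] is contained in the frontier of convexHull(K₁ ∪ K₂). -/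
/-- Every boundary point of the convex hull of the union of two nonempty compact
convex sets `K₁, K₂` (whose hull has nonempty interior) lies on the boundary of
`K₁`, on the boundary of `K₂`, or on a "bridge" segment joining a point of `K₁`
to a point of `K₂` that is entirely contained in the boundary of the hull. -/
theorem frontier_convexHull_union_structure
    (K₁ K₂ : Set (EuclideanSpace ℝ (Fin 2)))
    (hK₁c : IsCompact K₁) (hK₂c : IsCompact K₂)
    (hK₁ : Convex ℝ K₁) (hK₂ : Convex ℝ K₂)
    (hK₁ne : K₁.Nonempty) (hK₂ne : K₂.Nonempty)
    (hint : (interior (convexHull ℝ (K₁ ∪ K₂))).Nonempty)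
    (x : EuclideanSpace ℝ (Fin 2))
    (hx : x ∈ frontier (convexHull ℝ (K₁ ∪ K₂))) :
    x ∈ frontier K₁ ∨ x ∈ frontier K₂ ∨
      ∃ p ∈ K₁, ∃ q ∈ K₂, x ∈ segment ℝ p q ∧
        segment ℝ p q ⊆ frontier (convexHull ℝ (K₁ ∪ K₂)) := by
  set C := convexHull ℝ (K₁ ∪ K₂) with hC
  have hCconv : Convex ℝ C := convex_convexHull ℝ _
  have hxnotint : x ∉ interior C := by
    rw [← closure_diff_interior] at hx; exact hx.2
  -- Case x ∈ K₁
  by_cases hx1 : x ∈ K₁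
  · left
    rw [← closure_diff_interior]
    refine ⟨subset_closure hx1, fun h => hxnotint ?_⟩
    exact interior_mono ((Set.subset_union_left).trans (subset_convexHull ℝ _)) h
  by_cases hx2 : x ∈ K₂
  · right; left
    rw [← closure_diff_interior]
    refine ⟨subset_closure hx2, fun h => hxnotint ?_⟩
    exact interior_mono ((Set.subset_union_right).trans (subset_convexHull ℝ _)) h
  -- x is in the hull
  have hxC : x ∈ C := by
    rw [← closure_diff_interior] at hx
    have hclosed : IsClosed C := by
      have hJ : convexJoin ℝ K₁ K₂ =
          (fun z : ℝ × EuclideanSpace ℝ (Fin 2) × EuclideanSpace ℝ (Fin 2) =>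
            (1 - z.1) • z.2.1 + z.1 • z.2.2) '' (Set.Icc (0:ℝ) 1 ×ˢ K₁ ×ˢ K₂) := by
        ext w
        constructor
        · intro hw
          rw [mem_convexJoin] at hw
          obtain ⟨p, hp, q, hq, hwseg⟩ := hw
          rw [segment_eq_image'] at hwseg
          obtain ⟨θ, hθ, hweq⟩ := hwseg
          refine ⟨(θ, p, q), ⟨hθ, hp, hq⟩, ?_⟩
          simp only [← hweq]
          module
        · rintro ⟨⟨θ, p, q⟩, ⟨hθ, hp, hq⟩, hweq⟩
          rw [mem_convexJoin]
          refine ⟨p, hp, q, hq, ?_⟩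
          rw [segment_eq_image']
          exact ⟨θ, hθ, by rw [← hweq]; module⟩
      have : IsCompact C := by
        rw [hC, hK₁.convexHull_union hK₂ hK₁ne hK₂ne, hJ]
        exact ((isCompact_Icc).prod (hK₁c.prod hK₂c)).image (by fun_prop)
      exact this.isClosed
    rw [hclosed.closure_eq] at hx; exact hx.1
  rw [hC, hK₁.convexHull_union hK₂ hK₁ne hK₂ne, mem_convexJoin] at hxC
  obtain ⟨p, hp, q, hq, hxseg⟩ := hxC
  have hpC : p ∈ C := subset_convexHull ℝ _ (Set.mem_union_left _ hp)
  have hqC : q ∈ C := subset_convexHull ℝ _ (Set.mem_union_right _ hq)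
  obtain ⟨a, b, ha, hb, hab, hxeq⟩ := hxseg
  -- rename : x = (1-s)•p + s•q with 0 < s < 1
  set s := b with hs
  have has : a = 1 - s := by linarith
  have hs0 : 0 < s := by
    rcases lt_or_eq_of_le hb with h | h
    · exact h
    · exfalso; apply hx1
      have hx0 : x = p := by
        rw [← hxeq, ← h, show a = 1 by linarith]; simp
      rwa [hx0]
  have hs1 : s < 1 := by
    rcases lt_or_eq_of_le ha with h | h
    · linarith
    · exfalso; apply hx2
      have hx0 : x = q := by
        rw [← hxeq, ← h, show s = 1 by linarith]; simp
      rwa [hx0]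
  -- key claim: no point of segment p q is in the interior of C
  have key : ∀ y ∈ segment ℝ p q, y ∉ interior C := by
    rintro y ⟨c, t, hc, ht, hct, hyeq⟩ hyint
    have hcs : c = 1 - t := by linarith
    rcases le_or_gt t s with hts | hst
    · -- x is a combination of y (interior) and q (closure)
      have ht1 : t < 1 := lt_of_le_of_lt hts hs1
      have h1t : (1 : ℝ) - t ≠ 0 := by intro h; linarith [sub_eq_zero.mp h]
      have hx' : x = ((1 - s) / (1 - t)) • y + ((s - t) / (1 - t)) • q := by
        rw [← hyeq, ← hxeq, hcs, has]
        match_scalars <;> field_simp <;> ring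
      apply hxnotint
      rw [hx']
      exact hCconv.combo_interior_closure_mem_interior hyint (subset_closure hqC)
        (div_pos (by linarith) (by linarith))
        (div_nonneg (by linarith) (by linarith))
        (by field_simp; ring)
    · -- x is a combination of y (interior) and p (closure)
      have ht0 : 0 < t := lt_trans hs0 hst
      have h1t : t ≠ 0 := ne_of_gt ht0
      have hx' : x = (s / t) • y + ((t - s) / t) • p := by
        rw [← hyeq, ← hxeq, hcs, has]
        match_scalars <;> field_simp <;> ring
      apply hxnotint
      rw [hx']
      exact hCconv.combo_interior_closure_mem_interior hyint (subset_closure hpC)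
        (div_pos hs0 ht0)
        (div_nonneg (by linarith) (by linarith))
        (by field_simp; ring)
  right; right
  refine ⟨p, hp, q, hq, ⟨a, b, ha, hb, hab, hxeq⟩, fun y hy => ?_⟩
  have hyC : y ∈ C := hCconv.segment_subset hpC hqC hy
  rw [← closure_diff_interior]
  exact ⟨subset_closure hyC, key y hy⟩
end

section
/- Let K ⊆ ℝ² be a convex set with nonempty interior and let n ∈ ℝ² be a nonzero vector. Then there are at most two real numbers t such that the line {x ∈ ℝ² : ⟨x, n⟩ = t} contains a nondegenerate closed segment that is contained in the frontier of K. In other words, at most two distinct lines of any fixed direction contain a nondegenerate segment of the boundary of K. -/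
open scoped RealInnerProductSpace

/-- In `ℝ²`, two vectors orthogonal to a nonzero vector `n` are dependent. -/
lemma aux_dep (n u u' : EuclideanSpace ℝ (Fin 2)) (hn : n ≠ 0)
    (hu : ⟪u, n⟫ = 0) (hu' : ⟪u', n⟫ = 0) (h0 : u ≠ 0) : ∃ c : ℝ, u' = c • u := by
  have hiu : u 0 * n 0 + u 1 * n 1 = 0 := by
    simpa [PiLp.inner_apply, Fin.sum_univ_two, RCLike.inner_apply, mul_comm] using hu
  have hiu' : u' 0 * n 0 + u' 1 * n 1 = 0 := by
    simpa [PiLp.inner_apply, Fin.sum_univ_two, RCLike.inner_apply, mul_comm] using hu'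
  have hncase : n 0 ≠ 0 ∨ n 1 ≠ 0 := by
    by_contra hc; push_neg at hc
    exact hn (by ext i; fin_cases i <;> simp [hc.1, hc.2])
  rcases hncase with hn0 | hn1
  · have hu1 : u 1 ≠ 0 := by
      intro h1
      have hz0 : u 0 * n 0 = 0 := by rw [h1] at hiu; linarith
      have h0' : u 0 = 0 := (mul_eq_zero.mp hz0).resolve_right hn0
      exact h0 (by ext i; fin_cases i <;> simp [h0', h1])
    refine ⟨u' 1 / u 1, ?_⟩
    have key : u' 0 * u 1 * n 0 = u' 1 * u 0 * n 0 := by linear_combination u 1 * hiu' - u' 1 * hiu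
    have key2 : u' 0 * u 1 = u' 1 * u 0 := mul_right_cancel₀ hn0 key
    ext i; fin_cases i
    · show u' 0 = u' 1 / u 1 * u 0
      field_simp
      linarith [key2]
    · show u' 1 = u' 1 / u 1 * u 1
      field_simp
  · have hu0 : u 0 ≠ 0 := by
      intro h1
      have hz1 : u 1 * n 1 = 0 := by rw [h1] at hiu; linarith
      have h0' : u 1 = 0 := (mul_eq_zero.mp hz1).resolve_right hn1
      exact h0 (by ext i; fin_cases i <;> simp [h0', h1])
    refine ⟨u' 0 / u 0, ?_⟩
    have key : u' 1 * u 0 * n 1 = u' 0 * u 1 * n 1 := by linear_combination u 0 * hiu' - u' 0 * hiu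
    have key2 : u' 1 * u 0 = u' 0 * u 1 := mul_right_cancel₀ hn1 key
    ext i; fin_cases i
    · show u' 0 = u' 0 / u 0 * u 0
      field_simp
    · show u' 1 = u' 0 / u 0 * u 1
      field_simp
      linarith [key2]

/-- If a nondegenerate segment on the level line `⟪·,n⟫ = t` lies in the frontier of the
convex set `K`, then no interior point of `K` lies on that level line. -/
lemma claimA (K : Set (EuclideanSpace ℝ (Fin 2))) (hK : Convex ℝ K)
    (n : EuclideanSpace ℝ (Fin 2)) (hn : n ≠ 0) (t : ℝ)
    (w : EuclideanSpace ℝ (Fin 2)) (hw : w ∈ interior K) (hwt : ⟪w, n⟫ = t)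
    (p q : EuclideanSpace ℝ (Fin 2)) (hpq : p ≠ q)
    (hseg : segment ℝ p q ⊆ frontier K)
    (hlvl : segment ℝ p q ⊆ {x : EuclideanSpace ℝ (Fin 2) | ⟪x, n⟫ = t}) : False := by
  have hwf : w ∉ frontier K := fun h => h.2 hw
  have hp : p ∈ frontier K := hseg (left_mem_segment ℝ p q)
  have hq : q ∈ frontier K := hseg (right_mem_segment ℝ p q)
  have hpt : ⟪p, n⟫ = t := hlvl (left_mem_segment ℝ p q)
  have hqt : ⟪q, n⟫ = t := hlvl (right_mem_segment ℝ p q)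
  set u : EuclideanSpace ℝ (Fin 2) := p - w with hu_def
  have hu0 : u ≠ 0 := by
    intro h
    have : p = w := by rwa [hu_def, sub_eq_zero] at h
    exact hwf (this ▸ hp)
  have hu : ⟪u, n⟫ = 0 := by rw [hu_def, inner_sub_left, hpt, hwt, sub_self]
  have hu' : ⟪q - w, n⟫ = 0 := by rw [inner_sub_left, hqt, hwt, sub_self]
  obtain ⟨c, hc⟩ := aux_dep n u (q - w) hn hu hu' hu0
  have hpw : p = w + u := by rw [hu_def]; abel
  have hqw : q = w + c • u := by rw [← hc]; abel
  have hc1 : c ≠ 1 := by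
    intro h
    rw [h, one_smul] at hqw
    exact hpq (by rw [hpw, hqw])
  rcases le_or_gt c 0 with hcle | hcpos
  · -- w ∈ segment p q ⊆ frontier, contradiction
    apply hwf
    apply hseg
    have h1c : (1:ℝ) - c ≠ 0 := by intro h; linarith
    refine ⟨-c / (1 - c), 1 / (1 - c), ?_, ?_, ?_, ?_⟩
    · apply div_nonneg (by linarith) (by linarith)
    · apply div_nonneg (by norm_num) (by linarith)
    · field_simp
      ring
    · have h1 : -c / (1 - c) + 1 / (1 - c) = 1 := by field_simp; ring
      have h2 : -c / (1 - c) + (1 / (1 - c)) * c = 0 := by field_simp; ring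
      rw [hpw, hqw]
      have : (-c / (1 - c)) • (w + u) + (1 / (1 - c)) • (w + c • u)
          = (-c / (1 - c) + 1 / (1 - c)) • w + (-c / (1 - c) + (1 / (1 - c)) * c) • u := by
        module
      rw [this, h1, h2, one_smul, zero_smul, add_zero]
  · rcases lt_or_gt_of_ne hc1 with hclt | hcgt
    · -- 0 < c < 1 : q ∈ openSegment w p ⊆ interior K
      have : q ∈ openSegment ℝ w p := by
        refine ⟨1 - c, c, by linarith, hcpos, by ring, ?_⟩
        rw [hpw, hqw]; module
      have hqint : q ∈ interior K :=
        hK.openSegment_interior_closure_subset_interior hw (frontier_subset_closure hp) this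
      exact hq.2 hqint
    · -- c > 1 : p ∈ openSegment w q ⊆ interior K
      have hc0 : (0:ℝ) < c := by linarith
      have : p ∈ openSegment ℝ w q := by
        refine ⟨1 - 1 / c, 1 / c, ?_, by positivity, by ring, ?_⟩
        · have : 1 / c < 1 := by rw [div_lt_one hc0]; linarith
          linarith
        · rw [hpw, hqw]
          have h2 : (1 / c) * c = 1 := by field_simp
          have : (1 - 1 / c) • w + (1 / c) • (w + c • u)
              = ((1 - 1 / c) + 1 / c) • w + ((1 / c) * c) • u := by module
          rw [this, h2, one_smul]
          have h3 : (1 - 1 / c) + 1 / c = 1 := by ring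
          rw [h3, one_smul]
      have hpint : p ∈ interior K :=
        hK.openSegment_interior_closure_subset_interior hw (frontier_subset_closure hq) this
      exact hp.2 hpint

/-- For a convex set `K` with nonempty interior and a nonzero vector `n`, at most
two lines orthogonal to `n` (i.e. of the form `{x | ⟪x, n⟫ = t}`) contain a
nondegenerate segment of the frontier of `K`. -/
theorem lines_containing_frontier_segment_encard_le_two
    (K : Set (EuclideanSpace ℝ (Fin 2))) (hK : Convex ℝ K)
    (hint : (interior K).Nonempty)
    (n : EuclideanSpace ℝ (Fin 2)) (hn : n ≠ 0) :
    {t : ℝ | ∃ p q : EuclideanSpace ℝ (Fin 2), p ≠ q ∧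
        segment ℝ p q ⊆ frontier K ∧
        segment ℝ p q ⊆ {x : EuclideanSpace ℝ (Fin 2) | ⟪x, n⟫ = t}}.encard ≤ 2 := by
  set T := {t : ℝ | ∃ p q : EuclideanSpace ℝ (Fin 2), p ≠ q ∧
      segment ℝ p q ⊆ frontier K ∧
      segment ℝ p q ⊆ {x : EuclideanSpace ℝ (Fin 2) | ⟪x, n⟫ = t}} with hT
  obtain ⟨z, hz⟩ := hint
  -- key : no middle element
  have key : ∀ t₁ ∈ T, ∀ t₂ ∈ T, ∀ t₃ ∈ T, t₁ < t₂ → t₂ < t₃ → False := by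
    intro t₁ ht₁ t₂ ht₂ t₃ ht₃ h12 h23
    obtain ⟨p, q, hpq, hseg, hlvl⟩ := ht₂
    -- find an interior point at level t₂
    suffices hW : ∃ w ∈ interior K, ⟪w, n⟫ = t₂ by
      obtain ⟨w, hw, hwt⟩ := hW
      exact claimA K hK n hn t₂ w hw hwt p q hpq hseg hlvl
    set s := ⟪z, n⟫ with hs
    rcases lt_trichotomy s t₂ with hlt | heq | hgt
    · -- use a frontier point at level t₃ > t₂ > s
      obtain ⟨p₃, q₃, hpq₃, hseg₃, hlvl₃⟩ := ht₃
      have hp₃c : p₃ ∈ closure K := frontier_subset_closure (hseg₃ (left_mem_segment ℝ p₃ q₃))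
      have hp₃t : ⟪p₃, n⟫ = t₃ := hlvl₃ (left_mem_segment ℝ p₃ q₃)
      set θ := (t₂ - s) / (t₃ - s) with hθ
      have hθ0 : 0 < θ := by apply div_pos <;> linarith
      have hθ1 : θ < 1 := by rw [div_lt_one (by linarith)]; linarith
      refine ⟨(1 - θ) • z + θ • p₃, ?_, ?_⟩
      · exact hK.openSegment_interior_closure_subset_interior hz hp₃c
          ⟨1 - θ, θ, by linarith, hθ0, by ring, rfl⟩
      · have hne : t₃ - s ≠ 0 := by intro h; linarith
        rw [inner_add_left, real_inner_smul_left, real_inner_smul_left, ← hs, hp₃t, hθ]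
        field_simp
        ring
    · exact ⟨z, hz, heq⟩
    · -- use a frontier point at level t₁ < t₂ < s
      obtain ⟨p₁, q₁, hpq₁, hseg₁, hlvl₁⟩ := ht₁
      have hp₁c : p₁ ∈ closure K := frontier_subset_closure (hseg₁ (left_mem_segment ℝ p₁ q₁))
      have hp₁t : ⟪p₁, n⟫ = t₁ := hlvl₁ (left_mem_segment ℝ p₁ q₁)
      set θ := (s - t₂) / (s - t₁) with hθ
      have hθ0 : 0 < θ := by apply div_pos <;> linarith
      have hθ1 : θ < 1 := by rw [div_lt_one (by linarith)]; linarith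
      refine ⟨(1 - θ) • z + θ • p₁, ?_, ?_⟩
      · exact hK.openSegment_interior_closure_subset_interior hz hp₁c
          ⟨1 - θ, θ, by linarith, hθ0, by ring, rfl⟩
      · have hne : s - t₁ ≠ 0 := by intro h; linarith
        rw [inner_add_left, real_inner_smul_left, real_inner_smul_left, ← hs, hp₁t, hθ]
        field_simp
        ring
  by_contra hcon
  push_neg at hcon
  have h1 : (1:ℕ∞) < T.encard := lt_trans (by norm_num) hcon
  obtain ⟨a, b, ha, hb, hab⟩ := Set.one_lt_encard_iff.1 h1
  rcases Set.eq_empty_or_nonempty (T \ {a, b}) with hemp | ⟨c, hc⟩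
  · have hsub : T ⊆ {a, b} := Set.diff_eq_empty.mp hemp
    have : T.encard ≤ 2 := le_trans (Set.encard_mono hsub) (by rw [Set.encard_pair hab])
    exact absurd hcon (not_lt.mpr this)
  · obtain ⟨hcT, hcab⟩ := hc
    simp only [Set.mem_insert_iff, Set.mem_singleton_iff, not_or] at hcab
    obtain ⟨hca, hcb⟩ := hcab
    -- three distinct reals a b c in T; find the middle
    rcases lt_trichotomy a b with h1' | h1' | h1'
    · rcases lt_trichotomy c a with h2 | h2 | h2
      · exact key c hcT a ha b hb h2 h1'
      · exact absurd h2 hca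
      · rcases lt_trichotomy c b with h3 | h3 | h3
        · exact key a ha c hcT b hb h2 h3
        · exact absurd h3 hcb
        · exact key a ha b hb c hcT h1' h3
    · exact absurd h1' hab
    · rcases lt_trichotomy c b with h2 | h2 | h2
      · exact key c hcT b hb a ha h2 h1'
      · exact absurd h2 hcb
      · rcases lt_trichotomy c a with h3 | h3 | h3
        · exact key b hb c hcT a ha h2 h3
        · exact absurd h3 hca
        · exact key b hb a ha c hcT h1' h3
end

section
/- Let A and B be finite subsets of ℝ² such that convexHull(A) and convexHull(B) both have nonempty interior, and suppose no nondegenerate closed segment is contained in frontier(convexHull(A)) ∩ frontier(convexHull(B)). Then frontier(convexHull(A)) ∩ frontier(convexHull(B)) is a finite set with at most 2·|A| points. -/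
open Set

section Aux
variable {V : Type*} [NormedAddCommGroup V] [NormedSpace ℝ V]

noncomputable def sp2 (u v : V) (t : ℝ) : V := u + t • (v - u)

lemma lp_mem_segment {u v : V} {t : ℝ} (ht : t ∈ Icc (0:ℝ) 1) : sp2 u v t ∈ segment ℝ u v := by
  rw [segment_eq_image']; exact ⟨t, ht, rfl⟩

lemma lp_mem_openSegment {u v : V} {t : ℝ} (ht : t ∈ Ioo (0:ℝ) 1) :
    sp2 u v t ∈ openSegment ℝ u v := by
  rw [openSegment_eq_image']; exact ⟨t, ht, rfl⟩

lemma mem_segment_lp {u v x : V} (hx : x ∈ segment ℝ u v) :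
    ∃ t ∈ Icc (0:ℝ) 1, x = sp2 u v t := by
  rw [segment_eq_image'] at hx; obtain ⟨t, ht, h⟩ := hx; exact ⟨t, ht, h.symm⟩

lemma mem_openSegment_lp {u v x : V} (hx : x ∈ openSegment ℝ u v) :
    ∃ t ∈ Ioo (0:ℝ) 1, x = sp2 u v t := by
  rw [openSegment_eq_image'] at hx; obtain ⟨t, ht, h⟩ := hx; exact ⟨t, ht, h.symm⟩

lemma lp_inj {u v : V} (huv : u ≠ v) {s t : ℝ} (h : sp2 u v s = sp2 u v t) : s = t := by
  by_contra hne
  have h2 : (s - t) • (v - u) = 0 := by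
    simp only [sp2] at h
    linear_combination (norm := module) h
  rcases smul_eq_zero.1 h2 with h3 | h3
  · exact hne (by linarith [sub_eq_zero.1 h3])
  · exact huv (sub_eq_zero.1 h3).symm

lemma lp_zero (u v : V) : sp2 u v 0 = u := by simp [sp2]
lemma lp_one (u v : V) : sp2 u v 1 = v := by simp [sp2]

lemma mem_segment_cases {u v x : V} (hx : x ∈ segment ℝ u v) :
    x = u ∨ x = v ∨ x ∈ openSegment ℝ u v := by
  obtain ⟨t, ht, rfl⟩ := mem_segment_lp hx
  rcases eq_or_lt_of_le ht.1 with h0 | h0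
  · left; rw [← h0]; exact lp_zero u v
  rcases eq_or_lt_of_le ht.2 with h1 | h1
  · right; left; rw [h1]; exact lp_one u v
  · right; right; exact lp_mem_openSegment ⟨h0, h1⟩

lemma frontier_not_interior {K : Set V} {q : V} (hq : q ∈ frontier K) : q ∉ interior K :=
  fun h => hq.2 h

/-- chord dichotomy -/
lemma chord_frontier {K : Set V} (hK : Convex ℝ K) (hKc : IsClosed K)
    {p r q : V} (hp : p ∈ K) (hr : r ∈ K) (hq : q ∈ openSegment ℝ p r)
    (hqf : q ∈ frontier K) : segment ℝ p r ⊆ frontier K := by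
  intro y hy
  refine ⟨subset_closure (hK.segment_subset hp hr hy), fun hyint => ?_⟩
  -- y ∈ interior K leads to q ∈ interior K, contradiction
  apply hqf.2
  rcases eq_or_ne p r with rfl | hpr
  · rw [openSegment_same] at hq
    rw [segment_same] at hy
    rwa [hq, ← hy]
  obtain ⟨tq, htq, rfl⟩ := mem_openSegment_lp hq
  obtain ⟨ty, hty, rfl⟩ := mem_segment_lp hy
  rcases lt_trichotomy ty tq with hlt | heq | hgt
  · -- q ∈ openSegment y r
    have h1ty : (0:ℝ) < 1 - ty := by linarith [htq.2]
    have hqmem : sp2 p r tq ∈ openSegment ℝ (sp2 p r ty) r := by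
      have : sp2 p r tq = sp2 (sp2 p r ty) r ((tq - ty)/(1 - ty)) := by
        simp only [sp2]
        have hs : (tq - ty)/(1 - ty) * (1 - ty) = tq - ty := by field_simp
        match_scalars <;> field_simp <;> ring
      rw [this]
      exact lp_mem_openSegment ⟨div_pos (by linarith) h1ty, by rw [div_lt_one h1ty]; linarith [htq.2]⟩
    exact hK.openSegment_interior_closure_subset_interior hyint (subset_closure hr) hqmem
  · exact heq ▸ hyint
  · -- q ∈ openSegment y p
    have hty0 : (0:ℝ) < ty := lt_trans htq.1 hgt
    have hqmem : sp2 p r tq ∈ openSegment ℝ (sp2 p r ty) p := by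
      have : sp2 p r tq = sp2 (sp2 p r ty) p ((ty - tq)/ty) := by
        simp only [sp2]
        match_scalars <;> field_simp <;> ring
      rw [this]
      exact lp_mem_openSegment ⟨div_pos (by linarith) hty0, by rw [div_lt_one hty0]; linarith [htq.1]⟩
    exact hK.openSegment_interior_closure_subset_interior hyint (subset_closure hp) hqmem

end Aux
open Set

variable {V : Type*} [NormedAddCommGroup V] [NormedSpace ℝ V]

/-- two vectors are independent -/
def IndepPair (x y : V) : Prop := ∀ a b : ℝ, a • x + b • y = 0 → a = 0 ∧ b = 0

lemma IndepPair.of_ne_zero_not_smul {x y : V} (hx : x ≠ 0) (h : ∀ c : ℝ, y ≠ c • x) :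
    IndepPair x y := by
  intro a b hab
  rcases eq_or_ne b 0 with rfl | hb
  · rw [zero_smul, add_zero, smul_eq_zero] at hab
    exact ⟨hab.resolve_right hx, rfl⟩
  · exfalso
    apply h (-a / b)
    have : b • y = (-a) • x := by
      rw [neg_smul, eq_neg_iff_add_eq_zero, add_comm]; exact hab
    calc y = (b⁻¹ * b) • y := by rw [inv_mul_cancel₀ hb, one_smul]
    _ = b⁻¹ • ((-a) • x) := by rw [mul_smul, this]
    _ = (-a / b) • x := by rw [smul_smul, div_eq_mul_inv, mul_comm]

lemma IndepPair.left_ne_zero {x y : V} (h : IndepPair x y) : x ≠ 0 := by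
  intro hx
  simpa using (h 1 0 (by simp [hx])).1

lemma IndepPair.right_ne_zero {x y : V} (h : IndepPair x y) : y ≠ 0 := by
  intro hy
  simpa using (h 0 1 (by simp [hy])).2

lemma IndepPair.symm {x y : V} (h : IndepPair x y) : IndepPair y x := by
  intro a b hab
  have := h b a (by rw [add_comm]; exact hab)
  exact ⟨this.2, this.1⟩

lemma combo3_mem_interior [FiniteDimensional ℝ V] (hrank : Module.finrank ℝ V = 2)
    {K : Set V} (hK : Convex ℝ K)
    {p1 p2 p3 : V} (h1 : p1 ∈ K) (h2 : p2 ∈ K) (h3 : p3 ∈ K)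
    (hind : IndepPair (p2 - p1) (p3 - p1)) {w1 w2 w3 : ℝ} (hw1 : 0 < w1) (hw2 : 0 < w2)
    (hw3 : 0 < w3) (hsum : w1 + w2 + w3 = 1) :
    w1 • p1 + w2 • p2 + w3 • p3 ∈ interior K := by
  have hrange3 : Set.range ![p1, p2, p3] = {p1, p2, p3} := by
    ext x
    constructor
    · rintro ⟨i, rfl⟩; fin_cases i <;> simp
    · rintro (rfl | rfl | rfl)
      exacts [⟨0, rfl⟩, ⟨1, rfl⟩, ⟨2, rfl⟩]
  have haff : AffineIndependent ℝ ![p1, p2, p3] := by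
    rw [affineIndependent_iff_not_collinear]
    intro hcol
    rw [hrange3] at hcol
    rw [collinear_iff_of_mem (Set.mem_insert p1 _)] at hcol
    obtain ⟨v, hv⟩ := hcol
    obtain ⟨a, ha⟩ := hv p2 (by simp)
    obtain ⟨b, hb⟩ := hv p3 (by simp)
    have ha' : p2 - p1 = a • v := by rw [ha]; simp
    have hb' : p3 - p1 = b • v := by rw [hb]; simp
    rcases eq_or_ne a 0 with rfl | ha0
    · exact hind.left_ne_zero (by rw [ha']; simp)
    · have : b • (p2 - p1) + (-a) • (p3 - p1) = 0 := by
        rw [ha', hb', smul_smul, smul_smul]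
        rw [mul_comm]
        simp [neg_smul]
      exact ha0 (neg_eq_zero.1 (hind b (-a) this).2)
  have htot : affineSpan ℝ (Set.range ![p1, p2, p3]) = ⊤ := by
    rw [haff.affineSpan_eq_top_iff_card_eq_finrank_add_one]
    simp [hrank]
  let b : AffineBasis (Fin 3) ℝ V := ⟨![p1, p2, p3], haff, htot⟩
  have hwsum : (Finset.univ.sum ![w1, w2, w3]) = 1 := by
    simp [Fin.sum_univ_three]; linarith
  have hz : Finset.univ.affineCombination ℝ ![p1, p2, p3] ![w1, w2, w3]
      = w1 • p1 + w2 • p2 + w3 • p3 := by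
    rw [Finset.affineCombination_eq_linear_combination _ _ _ hwsum]
    simp [Fin.sum_univ_three]
  have hmem : w1 • p1 + w2 • p2 + w3 • p3 ∈ interior (convexHull ℝ (Set.range ⇑b)) := by
    rw [b.interior_convexHull]
    intro i
    have : b.coord i (Finset.univ.affineCombination ℝ ![p1, p2, p3] ![w1, w2, w3])
        = ![w1, w2, w3] i := by
      exact b.coord_apply_combination_of_mem (Finset.mem_univ i) hwsum
    rw [← hz, this]
    fin_cases i <;> simpa
  have hsub : convexHull ℝ (Set.range ⇑b) ⊆ K := by
    apply convexHull_min _ hK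
    rintro x ⟨i, rfl⟩
    fin_cases i <;> assumption
  exact interior_mono hsub hmem

lemma combo4_mem_interior [FiniteDimensional ℝ V] (hrank : Module.finrank ℝ V = 2)
    {K : Set V} (hK : Convex ℝ K)
    {p1 p2 p3 p4 : V} (h1 : p1 ∈ K) (h2 : p2 ∈ K) (h3 : p3 ∈ K) (h4 : p4 ∈ K)
    (hind : IndepPair (p2 - p1) (p3 - p1)) {w1 w2 w3 w4 : ℝ} (hw1 : 0 < w1) (hw2 : 0 < w2)
    (hw3 : 0 < w3) (hw4 : 0 ≤ w4) (hsum : w1 + w2 + w3 + w4 = 1) :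
    w1 • p1 + w2 • p2 + w3 • p3 + w4 • p4 ∈ interior K := by
  set s := w1 + w2 + w3 with hs
  have hs0 : 0 < s := by positivity
  have hq : (w1/s) • p1 + (w2/s) • p2 + (w3/s) • p3 ∈ interior K :=
    combo3_mem_interior hrank hK h1 h2 h3 hind (by positivity) (by positivity) (by positivity)
      (by field_simp; linarith)
  have heq : w1 • p1 + w2 • p2 + w3 • p3 + w4 • p4
      = s • ((w1/s) • p1 + (w2/s) • p2 + (w3/s) • p3) + w4 • p4 := by
    match_scalars <;> field_simp
  rw [heq]
  exact hK.combo_interior_closure_mem_interior hq (subset_closure h4) hs0 hw4 (by linarith)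

variable {V : Type*} [NormedAddCommGroup V] [NormedSpace ℝ V]

/-- RA: an open-segment frontier point cannot emit a frontier segment transversal
to its edge. -/
lemma no_transversal [FiniteDimensional ℝ V] (hrank : Module.finrank ℝ V = 2)
    {K : Set V} (hK : Convex ℝ K) (hKc : IsClosed K) {y1 y2 y3 x : V}
    (h12 : segment ℝ y1 y2 ⊆ frontier K) (hx : x ∈ openSegment ℝ y1 y2)
    (h3 : segment ℝ x y3 ⊆ frontier K) (hy12 : y1 ≠ y2)
    (hnd : ∀ c : ℝ, y3 - x ≠ c • (y2 - y1)) : False := by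
  have hfs : frontier K ⊆ K := hKc.frontier_subset
  obtain ⟨a, b, ha, hb, hab, hxe⟩ := hx
  have hy1K : y1 ∈ K := hfs (h12 (left_mem_segment ℝ y1 y2))
  have hy2K : y2 ∈ K := hfs (h12 (right_mem_segment ℝ y1 y2))
  have hy3K : y3 ∈ K := hfs (h3 (right_mem_segment ℝ x y3))
  have hind : IndepPair (y2 - y1) (y3 - y1) := by
    apply IndepPair.of_ne_zero_not_smul (sub_ne_zero.2 hy12.symm)
    intro c hc
    apply hnd (c - b)
    have hx1 : y1 - x = b • (y1 - y2) := by
      rw [← hxe]; match_scalars <;> linarith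
    calc y3 - x = (y3 - y1) + (y1 - x) := by abel
    _ = c • (y2 - y1) + b • (y1 - y2) := by rw [hc, hx1]
    _ = (c - b) • (y2 - y1) := by match_scalars <;> ring
  have hz : (1/2 : ℝ) • x + (1/2 : ℝ) • y3 ∈ frontier K :=
    h3 ⟨1/2, 1/2, by norm_num, by norm_num, by norm_num, rfl⟩
  apply hz.2
  have heq : (1/2 : ℝ) • x + (1/2 : ℝ) • y3
      = (a/2) • y1 + (b/2) • y2 + (1/2 : ℝ) • y3 := by
    rw [← hxe]; match_scalars <;> ring
  rw [heq]
  exact combo3_mem_interior hrank hK hy1K hy2K hy3K hind (by linarith) (by linarith)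
    (by norm_num) (by linarith)

/-- a frontier ray cannot lie in the open cone of two other frontier rays -/
lemma cone_case [FiniteDimensional ℝ V] (hrank : Module.finrank ℝ V = 2)
    {K : Set V} (hK : Convex ℝ K) (hKc : IsClosed K) {u a b c : V}
    (hsa : segment ℝ u a ⊆ frontier K) (hsb : segment ℝ u b ⊆ frontier K)
    (hsc : segment ℝ u c ⊆ frontier K)
    (hind : IndepPair (a - u) (b - u)) {p q : ℝ} (hp : 0 < p) (hq : 0 < q)
    (hc : c - u = p • (a - u) + q • (b - u)) : False := by
  have hfs : frontier K ⊆ K := hKc.frontier_subset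
  have huK : u ∈ K := hfs (hsa (left_mem_segment ℝ u a))
  have haK : a ∈ K := hfs (hsa (right_mem_segment ℝ u a))
  have hbK : b ∈ K := hfs (hsb (right_mem_segment ℝ u b))
  set ε : ℝ := min 1 (1/(p+q)) / 2 with hε
  have hεpos : 0 < ε := by positivity
  have hε1 : ε ≤ 1/2 := by
    rw [hε]; gcongr; exact min_le_left _ _
  have hεpq : ε * (p + q) ≤ 1/2 := by
    rw [hε]
    calc min 1 (1/(p+q)) / 2 * (p + q) ≤ (1/(p+q)) / 2 * (p+q) := by
          gcongr; exact min_le_right _ _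
    _ = 1/2 := by field_simp
  have hzf : u + ε • (c - u) ∈ frontier K := by
    apply hsc
    rw [segment_eq_image']
    exact ⟨ε, ⟨hεpos.le, by linarith⟩, rfl⟩
  apply hzf.2
  have heq : u + ε • (c - u) = (1 - ε*p - ε*q) • u + (ε*p) • a + (ε*q) • b := by
    linear_combination (norm := match_scalars <;> ring) ε • hc
  rw [heq]
  have h1 : 0 < ε * p := by positivity
  have h2 : 0 < ε * q := by positivity
  have h0 : 0 < 1 - ε*p - ε*q := by nlinarith
  exact combo3_mem_interior hrank hK huK haK hbK hind h0 h1 h2 (by ring)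

/-- a frontier point cannot have three rays positively spanning zero -/
lemma zero_case [FiniteDimensional ℝ V] (hrank : Module.finrank ℝ V = 2)
    {K : Set V} (hK : Convex ℝ K) (hKc : IsClosed K) {u v1 v2 v3 : V}
    (hs1 : segment ℝ u v1 ⊆ frontier K) (hs2 : segment ℝ u v2 ⊆ frontier K)
    (hs3 : segment ℝ u v3 ⊆ frontier K)
    (hind : IndepPair (v1 - u) (v2 - u)) {α β : ℝ} (hα : α < 0) (hβ : β < 0)
    (h3 : v3 - u = α • (v1 - u) + β • (v2 - u)) : False := by
  have hfs : frontier K ⊆ K := hKc.frontier_subset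
  have huK : u ∈ K := hfs (hs1 (left_mem_segment ℝ u v1))
  have h1K : v1 ∈ K := hfs (hs1 (right_mem_segment ℝ u v1))
  have h2K : v2 ∈ K := hfs (hs2 (right_mem_segment ℝ u v2))
  have h3K : v3 ∈ K := hfs (hs3 (right_mem_segment ℝ u v3))
  have huf : u ∈ frontier K := hs1 (left_mem_segment ℝ u v1)
  apply huf.2
  have hden : (0:ℝ) < 1 + (-α) + (-β) := by linarith
  set s : ℝ := 1 / (2 * (1 + (-α) + (-β))) with hs
  have hspos : 0 < s := by
    rw [hs]; exact div_pos one_pos (by linarith)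
  have hsd : s * (1 + (-α) + (-β)) = 1/2 := by
    rw [hs, div_mul_eq_mul_div, one_mul, mul_comm 2, ← div_div, div_self hden.ne']
  have hkey : s*(-α) + s*(-β) + s = 1/2 := by linear_combination hsd
  have h0 : 0 < 1 - (s*(-α) + s*(-β) + s) := by rw [hkey]; norm_num
  have heq : u = (1 - (s*(-α) + s*(-β) + s)) • u + (s*(-α)) • v1 + (s*(-β)) • v2 + s • v3 := by
    linear_combination (norm := match_scalars <;> ring) (-s) • h3
  rw [heq]
  exact combo4_mem_interior hrank hK huK h1K h2K h3K hind h0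
    (mul_pos hspos (by linarith)) (mul_pos hspos (by linarith)) hspos.le (by ring)

/-- at most two frontier rays from a point: three pairwise independent is absurd -/
lemma no_three_rays [FiniteDimensional ℝ V] (hrank : Module.finrank ℝ V = 2)
    {K : Set V} (hK : Convex ℝ K) (hKc : IsClosed K) {u v1 v2 v3 : V}
    (hs1 : segment ℝ u v1 ⊆ frontier K) (hs2 : segment ℝ u v2 ⊆ frontier K)
    (hs3 : segment ℝ u v3 ⊆ frontier K)
    (h12 : IndepPair (v1 - u) (v2 - u)) (h13 : IndepPair (v1 - u) (v3 - u))
    (h23 : IndepPair (v2 - u) (v3 - u)) : False := by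
  set d1 := v1 - u
  set d2 := v2 - u
  set d3 := v3 - u
  have hli : LinearIndependent ℝ ![d1, d2] := LinearIndependent.pair_iff.2 fun s t h => h12 s t h
  let bas : Module.Basis (Fin 2) ℝ V := basisOfLinearIndependentOfCardEqFinrank hli (by simp [hrank])
  have hbas0 : bas 0 = d1 := by simp [bas, coe_basisOfLinearIndependentOfCardEqFinrank]
  have hbas1 : bas 1 = d2 := by simp [bas, coe_basisOfLinearIndependentOfCardEqFinrank]
  set α := bas.repr d3 0 with hα
  set β := bas.repr d3 1 with hβ
  have hrep : d3 = α • d1 + β • d2 := by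
    have h := bas.sum_repr d3
    rw [Fin.sum_univ_two, hbas0, hbas1] at h
    rw [hα, hβ]
    exact h.symm
  have hαne : α ≠ 0 := by
    rintro h0
    rw [h0, zero_smul, zero_add] at hrep
    exact absurd (h23 β (-1) (by linear_combination (norm := module) -hrep)).2 (by norm_num)
  have hβne : β ≠ 0 := by
    rintro h0
    rw [h0, zero_smul, add_zero] at hrep
    exact absurd (h13 α (-1) (by linear_combination (norm := module) -hrep)).2 (by norm_num)
  rcases lt_or_gt_of_ne hαne with hαneg | hαpos
  · rcases lt_or_gt_of_ne hβne with hβneg | hβpos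
    · exact zero_case hrank hK hKc hs1 hs2 hs3 h12 hαneg hβneg hrep
    · -- α<0, β>0 : d2 = (1/β) d3 + (-α/β) d1
      have key : d2 = (1/β) • d3 + (-α/β) • d1 := by
        rw [hrep]; match_scalars <;> field_simp <;> ring
      exact cone_case hrank hK hKc hs3 hs1 hs2 h13.symm
        (p := 1/β) (q := -α/β) (div_pos one_pos hβpos) (div_pos (by linarith) hβpos) key
  · rcases lt_or_gt_of_ne hβne with hβneg | hβpos
    · -- α>0, β<0 : d1 = (1/α) d3 + (-β/α) d2
      have key : d1 = (1/α) • d3 + (-β/α) • d2 := by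
        rw [hrep]; match_scalars <;> field_simp <;> ring
      exact cone_case hrank hK hKc hs3 hs2 hs1 h23.symm
        (p := 1/α) (q := -β/α) (div_pos one_pos hαpos) (div_pos (by linarith) hαpos) key
    · exact cone_case hrank hK hKc hs1 hs2 hs3 h12 hαpos hβpos hrep
variable [FiniteDimensional ℝ V]

/-- decomposition: a hull point not in `A` is strictly inside a chord from a point of `A` -/
lemma exists_openSegment_rep {A : Set V} (hA : A.Finite) {x : V}
    (hx : x ∈ convexHull ℝ A) (hxA : x ∉ A) :
    ∃ a ∈ A, ∃ y ∈ convexHull ℝ A, x ∈ openSegment ℝ a y := by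
  classical
  rw [← hA.coe_toFinset, Finset.convexHull_eq] at hx
  obtain ⟨w, hw0, hw1, hcm⟩ := hx
  set s := hA.toFinset with hsdef
  set t := s.filter (fun y => 0 < w y) with htdef
  have htsub : ∀ y, y ∈ t → y ∈ A := by
    intro y hy
    have := Finset.mem_of_mem_filter y hy
    rwa [hsdef, Set.Finite.mem_toFinset] at this
  have htpos : ∀ y ∈ t, 0 < w y := fun y hy => (Finset.mem_filter.1 hy).2
  have ht1 : ∑ y ∈ t, w y = 1 := by
    rw [htdef, ← hw1]
    apply Finset.sum_filter_of_ne
    intro y hy hne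
    exact lt_of_le_of_ne (hw0 y hy) (Ne.symm hne)
  have hcm' : t.centerMass w id = x := by
    rw [htdef]
    have : s.filter (fun y => 0 < w y) = s.filter (fun y => w y ≠ 0) := by
      apply Finset.filter_congr
      intro y hy
      simp only [ne_eq, eq_iff_iff]
      constructor
      · intro h; exact h.ne'
      · intro h; exact lt_of_le_of_ne (hw0 y hy) (Ne.symm h)
    rw [this, Finset.centerMass_filter_ne_zero]
    exact hcm
  have htne : t.Nonempty := by
    rcases Finset.eq_empty_or_nonempty t with h | h
    · rw [h, Finset.sum_empty] at ht1; norm_num at ht1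
    · exact h
  obtain ⟨a, hat⟩ := htne
  have haA : a ∈ A := htsub a hat
  set t' := t.erase a with ht'def
  rcases Finset.eq_empty_or_nonempty t' with ht'e | ht'ne
  · -- t = {a}, so x = a, contradiction
    exfalso
    have hta : t = {a} := by
      apply Finset.eq_singleton_iff_unique_mem.2 ⟨hat, ?_⟩
      intro y hy
      by_contra hne
      exact Finset.notMem_empty y (ht'e ▸ Finset.mem_erase.2 ⟨hne, hy⟩)
    apply hxA
    have hxa : x = a := by
      rw [hta, Finset.centerMass_singleton (i := a) (w := w) (z := id) (htpos a hat).ne'] at hcm'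
      exact hcm'.symm
    rw [hxa]
    exact haA
  · have hins : t = insert a t' := (Finset.insert_erase hat).symm
    have hanot : a ∉ t' := Finset.notMem_erase a t
    have hsum' : ∑ y ∈ t', w y = 1 - w a := by
      rw [hins, Finset.sum_insert hanot] at ht1; linarith
    have hpos' : 0 < ∑ y ∈ t', w y := by
      apply Finset.sum_pos _ ht'ne
      intro i hi
      exact htpos i (Finset.mem_of_mem_erase hi)
    have hwa : 0 < w a := htpos a hat
    have hwa1 : w a < 1 := by linarith
    refine ⟨a, haA, t'.centerMass w id, ?_, ?_⟩
    · apply Finset.centerMass_mem_convexHull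
      · intro i hi; exact (htpos i (Finset.mem_of_mem_erase hi)).le
      · exact hpos'
      · intro i hi; exact htsub i (Finset.mem_of_mem_erase hi)
    · have hne0 : ∑ y ∈ t', w y ≠ 0 := by rw [hsum']; linarith
      have := Finset.centerMass_insert (i := a) (t := t') (w := w) (z := id) hanot hne0
      rw [← hins, hcm', hsum'] at this
      have hsum1 : w a + (1 - w a) = 1 := by ring
      rw [hsum1] at this
      refine ⟨w a, 1 - w a, hwa, by linarith, by ring, ?_⟩
      rw [this]
      simp

/-- maximal frontier segment: nondegenerate, inside frontier, and the whole intersection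
of `K` with its line -/
def IsMaxEdge (K : Set V) (u v : V) : Prop :=
  u ≠ v ∧ segment ℝ u v ⊆ frontier K ∧ ∀ t : ℝ, sp2 u v t ∈ K → t ∈ Icc (0:ℝ) 1

lemma sp2_reparam (a y : V) (t1 t2 s : ℝ) :
    sp2 (sp2 a y t1) (sp2 a y t2) s = sp2 a y (t1 + s*(t2-t1)) := by
  simp only [sp2]
  match_scalars <;> ring

lemma IsMaxEdge.symm {K : Set V} {u v : V} (h : IsMaxEdge K u v) : IsMaxEdge K v u := by
  obtain ⟨hne, hfr, hmax⟩ := h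
  refine ⟨hne.symm, by rwa [segment_symm], fun t ht => ?_⟩
  have : sp2 v u t = sp2 u v (1 - t) := by simp only [sp2]; match_scalars <;> ring
  rw [this] at ht
  have := hmax _ ht
  constructor <;> [linarith [this.2]; linarith [this.1]]

lemma IsMaxEdge.left_mem_frontier {K : Set V} {u v : V} (h : IsMaxEdge K u v) :
    u ∈ frontier K := h.2.1 (left_mem_segment ℝ u v)

/-- existence of a maximal edge through a nondegenerate frontier segment -/
lemma exists_maxEdge {K : Set V} (hK : Convex ℝ K) (hKc : IsClosed K) (hKb : IsCompact K)
    {a y : V} (hay : a ≠ y) (hseg : segment ℝ a y ⊆ frontier K) :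
    ∃ u v, IsMaxEdge K u v ∧ segment ℝ a y ⊆ segment ℝ u v := by
  have hfs : frontier K ⊆ K := hKc.frontier_subset
  set T : Set ℝ := {t : ℝ | sp2 a y t ∈ K} with hT
  have h0T : (0:ℝ) ∈ T := by
    show sp2 a y 0 ∈ K; rw [lp_zero]; exact hfs (hseg (left_mem_segment ℝ a y))
  have h1T : (1:ℝ) ∈ T := by
    show sp2 a y 1 ∈ K; rw [lp_one]; exact hfs (hseg (right_mem_segment ℝ a y))
  have hTconv : Convex ℝ T := by
    intro s hs t ht c d hc hd hcd
    show sp2 a y (c*s + d*t) ∈ K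
    have : sp2 a y (c*s + d*t) = c • sp2 a y s + d • sp2 a y t := by
      simp only [sp2]; match_scalars <;> ring_nf <;> linarith
    rw [this]
    exact hK hs ht hc hd hcd
  have hTclosed : IsClosed T := by
    have : Continuous fun t : ℝ => sp2 a y t := by
      simp only [sp2]; fun_prop
    exact hKc.preimage this
  have hTbdd : Bornology.IsBounded T := by
    obtain ⟨C, hC⟩ := hKb.isBounded.exists_norm_le
    have hyane : (0:ℝ) < ‖y - a‖ := norm_pos_iff.mpr (sub_ne_zero.2 (Ne.symm hay))
    apply (Metric.isBounded_Icc (-((C + ‖a‖)/‖y-a‖)) ((C + ‖a‖)/‖y-a‖)).subset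
    intro t ht
    have h1 : ‖t • (y - a)‖ ≤ C + ‖a‖ := by
      have : t • (y - a) = sp2 a y t - a := by simp [sp2]
      rw [this]
      calc ‖sp2 a y t - a‖ ≤ ‖sp2 a y t‖ + ‖a‖ := norm_sub_le _ _
      _ ≤ C + ‖a‖ := by gcongr; exact hC _ ht
    rw [norm_smul, Real.norm_eq_abs] at h1
    have h2 : |t| ≤ (C + ‖a‖)/‖y-a‖ := by
      rw [le_div_iff₀ hyane]; exact h1
    exact abs_le.1 h2
  have hTcpt : IsCompact T := Metric.isCompact_of_isClosed_isBounded hTclosed hTbdd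
  have hTne : T.Nonempty := ⟨0, h0T⟩
  set t1 := sInf T with ht1
  set t2 := sSup T with ht2
  have ht1T : t1 ∈ T := hTcpt.sInf_mem hTne
  have ht2T : t2 ∈ T := hTcpt.sSup_mem hTne
  have hbddb : BddBelow T := hTbdd.bddBelow
  have hbdda : BddAbove T := hTbdd.bddAbove
  have ht10 : t1 ≤ 0 := csInf_le hbddb h0T
  have ht21 : 1 ≤ t2 := le_csSup hbdda h1T
  have ht12 : t1 < t2 := by linarith
  have hTicc : T = Icc t1 t2 := by
    apply Set.Subset.antisymm
    · intro t ht; exact ⟨csInf_le hbddb ht, le_csSup hbdda ht⟩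
    · exact hTconv.ordConnected.out ht1T ht2T
  set u := sp2 a y t1 with hu
  set v := sp2 a y t2 with hv
  have huv : u ≠ v := fun h => ht12.ne (lp_inj hay h)
  have hsub : segment ℝ a y ⊆ segment ℝ u v := by
    intro x hx
    obtain ⟨t, ht, rfl⟩ := mem_segment_lp hx
    have hne12 : t2 - t1 ≠ 0 := by linarith
    have : sp2 a y t = sp2 u v ((t - t1)/(t2 - t1)) := by
      rw [hu, hv, sp2_reparam]
      congr 1
      rw [div_mul_cancel₀ _ hne12]
      ring
    rw [this]
    apply lp_mem_segment
    constructor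
    · apply div_nonneg (by linarith [ht.1]) (by linarith)
    · rw [div_le_one (by linarith)]; linarith [ht.2]
  have hmid : sp2 a y (1/2) ∈ openSegment ℝ u v := by
    have hne12 : t2 - t1 ≠ 0 := by linarith
    have : sp2 a y (1/2) = sp2 u v ((1/2 - t1)/(t2 - t1)) := by
      rw [hu, hv, sp2_reparam]
      congr 1
      rw [div_mul_cancel₀ _ hne12]
      ring
    rw [this]
    apply lp_mem_openSegment
    constructor
    · apply div_pos (by linarith) (by linarith)
    · rw [div_lt_one (by linarith)]; linarith
  have hfr : segment ℝ u v ⊆ frontier K :=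
    chord_frontier hK hKc ht1T ht2T hmid (hseg (lp_mem_segment (by norm_num)))
  refine ⟨u, v, ⟨huv, hfr, fun s hs => ?_⟩, hsub⟩
  rw [hu, hv, sp2_reparam] at hs
  have : t1 + s*(t2-t1) ∈ Icc t1 t2 := hTicc ▸ hs
  constructor
  · nlinarith [this.1]
  · nlinarith [this.2]

lemma mem_openSegment_of_ne {u v x : V} (huv : u ≠ v) (hx : x ∈ segment ℝ u v)
    (hxu : x ≠ u) (hxv : x ≠ v) : x ∈ openSegment ℝ u v := by
  obtain ⟨t, ht, rfl⟩ := mem_segment_lp hx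
  apply lp_mem_openSegment
  constructor
  · rcases eq_or_lt_of_le ht.1 with h | h
    · exact absurd (by rw [← h, lp_zero]) hxu
    · exact h
  · rcases eq_or_lt_of_le ht.2 with h | h
    · exact absurd (by rw [h, lp_one]) hxv
    · exact h

/-- a maximal edge absorbs every frontier segment crossing its relative interior -/
lemma maxEdge_absorbs [FiniteDimensional ℝ V] (hrank : Module.finrank ℝ V = 2)
    {K : Set V} (hK : Convex ℝ K) (hKc : IsClosed K)
    {u v : V} (hE : IsMaxEdge K u v) {p q x : V}
    (hpq : segment ℝ p q ⊆ frontier K) (hx : x ∈ openSegment ℝ p q)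
    (hxE : x ∈ segment ℝ u v) : segment ℝ p q ⊆ segment ℝ u v := by
  obtain ⟨huv, hfr, hmax⟩ := hE
  have hfs : frontier K ⊆ K := hKc.frontier_subset
  rcases eq_or_ne p q with rfl | hpqne
  · rw [segment_same]
    rw [openSegment_same] at hx
    rw [hx] at hxE
    exact singleton_subset_iff.2 hxE
  by_cases hpar : ∃ c : ℝ, q - p = c • (v - u)
  · obtain ⟨c, hc⟩ := hpar
    obtain ⟨tx, htx, rfl⟩ := mem_segment_lp hxE
    obtain ⟨s, hs, hxs⟩ := mem_openSegment_lp hx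
    -- p = sp2 u v (tx - s*c), q = sp2 u v (tx + (1-s)*c)
    have hp' : p = sp2 u v (tx - s*c) := by
      have : p = sp2 u v tx - s • (q - p) := by
        rw [hxs]; simp only [sp2]; match_scalars <;> ring
      rw [this, hc]; simp only [sp2]; match_scalars <;> ring
    have hq' : q = sp2 u v (tx + (1-s)*c) := by
      have : q = sp2 u v tx + (1-s) • (q - p) := by
        rw [hxs]; simp only [sp2]; match_scalars <;> ring
      rw [this, hc]; simp only [sp2]; match_scalars <;> ring
    have hpm : p ∈ segment ℝ u v := by
      rw [hp']; exact lp_mem_segment (hmax _ (hp' ▸ hfs (hpq (left_mem_segment ℝ p q))))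
    have hqm : q ∈ segment ℝ u v := by
      rw [hq']; exact lp_mem_segment (hmax _ (hq' ▸ hfs (hpq (right_mem_segment ℝ p q))))
    exact (convex_segment u v).segment_subset hpm hqm
  · exfalso
    push_neg at hpar
    -- pick an endpoint of the edge different from x
    have hxuv : x ≠ u ∨ x ≠ v := by
      rcases eq_or_ne x u with rfl | h
      · right; exact huv
      · left; exact h
    obtain ⟨y3, hy3seg, hy3ne⟩ : ∃ y3, y3 ∈ segment ℝ u v ∧ y3 ≠ x := by
      rcases hxuv with h | h
      · exact ⟨u, left_mem_segment ℝ u v, (Ne.symm h)⟩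
      · exact ⟨v, right_mem_segment ℝ u v, (Ne.symm h)⟩
    apply no_transversal hrank hK hKc hpq hx
      ((convex_segment u v).segment_subset hxE hy3seg |>.trans hfr) hpqne
    -- ∀ c, y3 - x ≠ c • (q - p)
    intro c hcon
    obtain ⟨tx, htx, rfl⟩ := mem_segment_lp hxE
    obtain ⟨t3, ht3, rfl⟩ := mem_segment_lp hy3seg
    have hd : sp2 u v t3 - sp2 u v tx = (t3 - tx) • (v - u) := by
      simp only [sp2]; match_scalars <;> ring
    have hcne : c ≠ 0 := by
      rintro rfl
      rw [zero_smul, sub_eq_zero] at hcon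
      exact hy3ne hcon
    have hkey : c • (q - p) = (t3 - tx) • (v - u) := by rw [← hcon, hd]
    apply hpar ((t3 - tx)/c)
    calc q - p = (1/c) • (c • (q - p)) := by
          rw [smul_smul, one_div, inv_mul_cancel₀ hcne, one_smul]
    _ = (1/c) • ((t3 - tx) • (v - u)) := by rw [hkey]
    _ = ((t3 - tx)/c) • (v - u) := by rw [smul_smul, one_div, ← div_eq_inv_mul]

lemma maxEdge_unique [FiniteDimensional ℝ V] (hrank : Module.finrank ℝ V = 2)
    {K : Set V} (hK : Convex ℝ K) (hKc : IsClosed K)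
    {u1 v1 u2 v2 x : V} (h1 : IsMaxEdge K u1 v1) (h2 : IsMaxEdge K u2 v2)
    (hx1 : x ∈ openSegment ℝ u1 v1) (hx2 : x ∈ openSegment ℝ u2 v2) :
    segment ℝ u1 v1 = segment ℝ u2 v2 :=
  Set.Subset.antisymm
    (maxEdge_absorbs hrank hK hKc h2 h1.2.1 hx1 (openSegment_subset_segment ℝ u2 v2 hx2))
    (maxEdge_absorbs hrank hK hKc h1 h2.2.1 hx2 (openSegment_subset_segment ℝ u1 v1 hx1))

lemma seg_ends_eq {u v u' v' : V} (huv : u ≠ v) (h : segment ℝ u v = segment ℝ u' v') :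
    (u' = u ∧ v' = v) ∨ (u' = v ∧ v' = u) := by
  have hu' : u' ∈ segment ℝ u v := h ▸ left_mem_segment ℝ u' v'
  have hv' : v' ∈ segment ℝ u v := h ▸ right_mem_segment ℝ u' v'
  obtain ⟨a, ha, hu'e⟩ := mem_segment_lp hu'
  obtain ⟨b, hb, hv'e⟩ := mem_segment_lp hv'
  have hu : u ∈ segment ℝ u' v' := h ▸ left_mem_segment ℝ u v
  have hv : v ∈ segment ℝ u' v' := h ▸ right_mem_segment ℝ u v
  obtain ⟨s, hs, hue⟩ := mem_segment_lp hu
  obtain ⟨s', hs', hve⟩ := mem_segment_lp hv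
  have h0 : (0:ℝ) = a + s*(b-a) := by
    apply lp_inj huv
    rw [lp_zero]
    calc u = sp2 u' v' s := hue
    _ = sp2 (sp2 u v a) (sp2 u v b) s := by rw [hu'e, hv'e]
    _ = sp2 u v (a + s*(b-a)) := sp2_reparam u v a b s
  have h1 : (1:ℝ) = a + s'*(b-a) := by
    apply lp_inj huv
    rw [lp_one]
    calc v = sp2 u' v' s' := hve
    _ = sp2 (sp2 u v a) (sp2 u v b) s' := by rw [hu'e, hv'e]
    _ = sp2 u v (a + s'*(b-a)) := sp2_reparam u v a b s'
  rcases le_total a b with hab | hab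
  · have ha0 : a = 0 := by nlinarith [hs.1, hs.2, ha.1]
    have hb1 : b = 1 := by nlinarith [hs'.1, hs'.2, hb.2]
    left
    constructor
    · rw [hu'e, ha0, lp_zero]
    · rw [hv'e, hb1, lp_one]
  · have ha1 : a = 1 := by nlinarith [hs'.1, hs'.2, ha.2]
    have hb0 : b = 0 := by nlinarith [hs.1, hs.2, hb.1]
    right
    constructor
    · rw [hu'e, ha1, lp_one]
    · rw [hv'e, hb0, lp_zero]

lemma maxEdge_end_mem [FiniteDimensional ℝ V] (hrank : Module.finrank ℝ V = 2)
    {A : Set V} (hA : A.Finite)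
    {u v : V} (hE : IsMaxEdge (convexHull ℝ A) u v) : u ∈ A := by
  set K := convexHull ℝ A with hKdef
  have hK : Convex ℝ K := convex_convexHull ℝ A
  have hKc : IsClosed K := hA.isClosed_convexHull ℝ
  by_contra hu
  have huf : u ∈ frontier K := hE.left_mem_frontier
  have huK : u ∈ K := hKc.frontier_subset huf
  obtain ⟨a, haA, y, hyK, hmem⟩ := exists_openSegment_rep hA huK hu
  have hane : a ≠ y := by
    rintro rfl
    rw [openSegment_same] at hmem
    rw [mem_singleton_iff] at hmem
    exact hu (hmem ▸ haA)
  have haK : a ∈ K := subset_convexHull ℝ A haA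
  have hchord : segment ℝ a y ⊆ frontier K := chord_frontier hK hKc haK hyK hmem huf
  obtain ⟨t, ht, hue⟩ := mem_openSegment_lp hmem
  have hmax := hE.2.2
  by_cases hpar : ∃ c : ℝ, y - a = c • (v - u)
  · obtain ⟨c, hc⟩ := hpar
    have hcne : c ≠ 0 := by
      rintro rfl
      rw [zero_smul] at hc
      exact hane (sub_eq_zero.1 hc).symm
    have hue' : u = a + t • (y - a) := hue
    have haeq : a = sp2 u v (-(t*c)) := by
      simp only [sp2]
      linear_combination (norm := match_scalars <;> ring) (-1 : ℝ) • hue' + (-t) • hc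
    have hyeq : y = sp2 u v ((1-t)*c) := by
      simp only [sp2]
      linear_combination (norm := match_scalars <;> ring) (-1 : ℝ) • hue' + (1-t) • hc
    have haK' : sp2 u v (-(t*c)) ∈ K := by
      rw [← haeq]; exact hKc.frontier_subset (hchord (left_mem_segment ℝ a y))
    have hyK' : sp2 u v ((1-t)*c) ∈ K := by
      rw [← hyeq]; exact hKc.frontier_subset (hchord (right_mem_segment ℝ a y))
    rcases lt_or_gt_of_ne hcne with hneg | hpos
    · have hm := hmax _ hyK'
      nlinarith [hm.1, ht.2]
    · have hm := hmax _ haK'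
      nlinarith [hm.1, ht.1]
  · push_neg at hpar
    apply no_transversal hrank hK hKc hchord hmem hE.2.1 hane
    intro c hcon
    have hvu : v - u ≠ 0 := sub_ne_zero.2 (Ne.symm hE.1)
    have hcne : c ≠ 0 := by rintro rfl; rw [zero_smul] at hcon; exact hvu hcon
    apply hpar (1/c)
    calc y - a = (1/c) • (c • (y - a)) := by
          rw [smul_smul, one_div, inv_mul_cancel₀ hcne, one_smul]
    _ = (1/c) • (v - u) := by rw [← hcon]

lemma maxEdge_parallel_eq {K : Set V} (hKc : IsClosed K) {u z z' : V}
    (h : IsMaxEdge K u z) (h' : IsMaxEdge K u z')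
    {c : ℝ} (hc : z' - u = c • (z - u)) : z' = z := by
  have hz'K : z' ∈ K := hKc.frontier_subset (h'.2.1 (right_mem_segment ℝ u z'))
  have hzK : z ∈ K := hKc.frontier_subset (h.2.1 (right_mem_segment ℝ u z))
  have hz'eq : sp2 u z c = z' := by
    simp only [sp2]; rw [← hc]; abel
  have hcIcc := h.2.2 c (by rw [hz'eq]; exact hz'K)
  have hcne : c ≠ 0 := by
    rintro rfl
    rw [zero_smul] at hc
    exact h'.1 (sub_eq_zero.1 hc).symm
  have h0c : 0 < c := lt_of_le_of_ne hcIcc.1 (Ne.symm hcne)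
  have hzeq : sp2 u z' (1/c) = z := by
    simp only [sp2]
    rw [hc, smul_smul, one_div, inv_mul_cancel₀ hcne, one_smul]
    abel
  have h1c := h'.2.2 (1/c) (by rw [hzeq]; exact hzK)
  have hc1 : c = 1 := by
    have h2 : (1:ℝ)/c ≤ 1 := h1c.2
    rw [div_le_one h0c] at h2
    linarith [hcIcc.2]
  rw [← hz'eq, hc1, lp_one]

lemma no_three_edges_at_vertex [FiniteDimensional ℝ V] (hrank : Module.finrank ℝ V = 2)
    {K : Set V} (hK : Convex ℝ K) (hKc : IsClosed K) {u z1 z2 z3 : V}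
    (h1 : IsMaxEdge K u z1) (h2 : IsMaxEdge K u z2) (h3 : IsMaxEdge K u z3)
    (h12 : z1 ≠ z2) (h13 : z1 ≠ z3) (h23 : z2 ≠ z3) : False := by
  have ind : ∀ z z' : V, IsMaxEdge K u z → IsMaxEdge K u z' → z ≠ z' →
      IndepPair (z - u) (z' - u) := by
    intro z z' hz hz' hne
    apply IndepPair.of_ne_zero_not_smul (sub_ne_zero.2 (Ne.symm hz.1))
    intro c hc
    exact hne (maxEdge_parallel_eq hKc hz hz' hc).symm
  exact no_three_rays hrank hK hKc h1.2.1 h2.2.1 h3.2.1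
    (ind _ _ h1 h2 h12) (ind _ _ h1 h3 h13) (ind _ _ h2 h3 h23)

lemma mid_openSegment {u v : V} (huv : u ≠ v) {ti tj tk : ℝ} (hij : ti < tj) (hjk : tj < tk) :
    sp2 u v tj ∈ openSegment ℝ (sp2 u v ti) (sp2 u v tk) := by
  have hne : tk - ti ≠ 0 := by linarith
  have : sp2 u v tj = sp2 (sp2 u v ti) (sp2 u v tk) ((tj - ti)/(tk - ti)) := by
    rw [sp2_reparam]
    congr 1
    rw [div_mul_cancel₀ _ hne]
    ring
  rw [this]
  apply lp_mem_openSegment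
  constructor
  · apply div_pos (by linarith) (by linarith)
  · rw [div_lt_one (by linarith)]; linarith

lemma three_in_segment {u v x1 x2 x3 : V}
    (h1 : x1 ∈ segment ℝ u v) (h2 : x2 ∈ segment ℝ u v) (h3 : x3 ∈ segment ℝ u v)
    (d12 : x1 ≠ x2) (d13 : x1 ≠ x3) (d23 : x2 ≠ x3) :
    x1 ∈ openSegment ℝ x2 x3 ∨ x2 ∈ openSegment ℝ x1 x3 ∨ x3 ∈ openSegment ℝ x1 x2 := by
  rcases eq_or_ne u v with rfl | huv
  · rw [segment_same, mem_singleton_iff] at h1 h2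
    exact absurd (h1.trans h2.symm) d12
  obtain ⟨t1, ht1, rfl⟩ := mem_segment_lp h1
  obtain ⟨t2, ht2, rfl⟩ := mem_segment_lp h2
  obtain ⟨t3, ht3, rfl⟩ := mem_segment_lp h3
  have e12 : t1 ≠ t2 := fun h => d12 (by rw [h])
  have e13 : t1 ≠ t3 := fun h => d13 (by rw [h])
  have e23 : t2 ≠ t3 := fun h => d23 (by rw [h])
  rcases lt_or_gt_of_ne e12 with h12 | h12 <;> rcases lt_or_gt_of_ne e13 with h13 | h13 <;>
    rcases lt_or_gt_of_ne e23 with h23 | h23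
  · right; left; exact mid_openSegment huv h12 h23
  · right; right; exact mid_openSegment huv h13 h23
  · linarith
  · left; rw [openSegment_symm]; exact mid_openSegment huv h13 h12
  · left; exact mid_openSegment huv h12 h13
  · linarith
  · right; right; rw [openSegment_symm]; exact mid_openSegment huv h23 h13
  · right; left; rw [openSegment_symm]; exact mid_openSegment huv h23 h12

lemma dist_lp_left {u v : V} {t : ℝ} (ht : 0 ≤ t) : dist (sp2 u v t) u = t * ‖v - u‖ := by
  rw [dist_eq_norm]
  have : sp2 u v t - u = t • (v - u) := by simp [sp2]
  rw [this, norm_smul, Real.norm_eq_abs, abs_of_nonneg ht]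

lemma dist_lp_right {u v : V} {t : ℝ} (ht : t ≤ 1) : dist (sp2 u v t) v = (1-t) * ‖v - u‖ := by
  rw [dist_eq_norm]
  have : sp2 u v t - v = (t-1) • (v - u) := by simp only [sp2]; match_scalars <;> ring
  rw [this, norm_smul, Real.norm_eq_abs, abs_of_nonpos (by linarith), neg_sub]

lemma subset_pair {α : Type*} [Nonempty α] {S : Set α}
    (h : ∀ a ∈ S, ∀ b ∈ S, ∀ c ∈ S, a = b ∨ a = c ∨ b = c) :
    ∃ a b, S ⊆ {a, b} := by
  rcases S.eq_empty_or_nonempty with rfl | ⟨a, ha⟩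
  · exact ⟨Classical.arbitrary α, Classical.arbitrary α, by simp⟩
  by_cases h2 : ∃ b ∈ S, b ≠ a
  · obtain ⟨b, hb, hba⟩ := h2
    refine ⟨a, b, fun c hc => ?_⟩
    rcases h a ha b hb c hc with h' | h' | h'
    · exact absurd h' hba.symm
    · exact mem_insert_iff.2 (Or.inl h'.symm)
    · exact mem_insert_iff.2 (Or.inr h'.symm)
  · push_neg at h2
    exact ⟨a, a, fun c hc => by simp [h2 c hc]⟩

lemma closer_flip {u v x y : V} (huv : u ≠ v) (hx : x ∈ openSegment ℝ u v)
    (hy : y ∈ openSegment ℝ u v) (hxy : x ≠ y) (hcmp : ¬ dist x u < dist y u) :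
    dist x v < dist y v := by
  obtain ⟨s, hs, rfl⟩ := mem_openSegment_lp hx
  obtain ⟨t, ht, rfl⟩ := mem_openSegment_lp hy
  have hdpos : (0:ℝ) < ‖v - u‖ := norm_pos_iff.mpr (sub_ne_zero.2 (Ne.symm huv))
  have hst : s ≠ t := fun h => hxy (by rw [h])
  rw [dist_lp_left hs.1.le, dist_lp_left ht.1.le] at hcmp
  rw [dist_lp_right hs.2.le, dist_lp_right ht.2.le]
  push_neg at hcmp
  have : t < s := by
    rcases lt_or_gt_of_ne hst with h | h
    · nlinarith
    · exact h
  nlinarith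

/-- If the convex hulls of two finite sets `A, B` both have nonempty interior and
their boundaries share no nondegenerate segment, then the two boundaries intersect
in a finite set of at most `2·|A|` points. -/
theorem frontier_inter_frontier_finite
    (A B : Set (EuclideanSpace ℝ (Fin 2))) (hA : A.Finite) (hB : B.Finite)
    (hintA : (interior (convexHull ℝ A)).Nonempty)
    (hintB : (interior (convexHull ℝ B)).Nonempty)
    (hnoseg : ¬ ∃ p q : EuclideanSpace ℝ (Fin 2), p ≠ q ∧
      segment ℝ p q ⊆ frontier (convexHull ℝ A) ∩ frontier (convexHull ℝ B)) :
    (frontier (convexHull ℝ A) ∩ frontier (convexHull ℝ B)).Finite ∧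
      (frontier (convexHull ℝ A) ∩ frontier (convexHull ℝ B)).ncard ≤ 2 * A.ncard := by
  classical
  have hrank : Module.finrank ℝ (EuclideanSpace ℝ (Fin 2)) = 2 := by
    simp [finrank_euclideanSpace]
  set KA := convexHull ℝ A with hKAdef
  set KB := convexHull ℝ B with hKBdef
  have hKAx : Convex ℝ KA := convex_convexHull ℝ A
  have hKBx : Convex ℝ KB := convex_convexHull ℝ B
  have hKAc : IsClosed KA := hA.isClosed_convexHull ℝ
  have hKBc : IsClosed KB := hB.isClosed_convexHull ℝ
  have hKAcpt : IsCompact KA := hA.isCompact_convexHull ℝ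
  set P := frontier KA ∩ frontier KB with hPdef
  -- no three distinct points of P in a common segment
  have hno3 : ∀ u v : EuclideanSpace ℝ (Fin 2), ∀ x1 ∈ P, ∀ x2 ∈ P, ∀ x3 ∈ P,
      x1 ∈ segment ℝ u v → x2 ∈ segment ℝ u v → x3 ∈ segment ℝ u v →
      x1 ≠ x2 → x1 ≠ x3 → x2 ≠ x3 → False := by
    intro u v x1 hx1 x2 hx2 x3 hx3 hs1 hs2 hs3 d12 d13 d23
    have key : ∀ p ∈ P, ∀ q ∈ P, ∀ r ∈ P, p ≠ r → q ∈ openSegment ℝ p r → False := by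
      intro p hp q hq r hr hpr hopen
      apply hnoseg
      refine ⟨p, r, hpr, fun z hz => ?_⟩
      constructor
      · exact chord_frontier hKAx hKAc (hKAc.frontier_subset hp.1) (hKAc.frontier_subset hr.1)
          hopen hq.1 hz
      · exact chord_frontier hKBx hKBc (hKBc.frontier_subset hp.2) (hKBc.frontier_subset hr.2)
          hopen hq.2 hz
    rcases three_in_segment hs1 hs2 hs3 d12 d13 d23 with h | h | h
    · exact key x2 hx2 x1 hx1 x3 hx3 d23 h
    · exact key x1 hx1 x2 hx2 x3 hx3 d13 h
    · exact key x1 hx1 x3 hx3 x2 hx2 d12 h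
  -- maximal edge through any P-point outside A
  have hedge : ∀ x : EuclideanSpace ℝ (Fin 2), ∃ u v : EuclideanSpace ℝ (Fin 2),
      x ∈ P → x ∉ A → (IsMaxEdge KA u v ∧ u ∈ A ∧ v ∈ A ∧ x ∈ openSegment ℝ u v) := by
    intro x
    by_cases hx : x ∈ P ∧ x ∉ A
    · obtain ⟨hxP, hxA⟩ := hx
      have hxKA : x ∈ KA := hKAc.frontier_subset hxP.1
      obtain ⟨a, haA, y, hyK, hmem⟩ := exists_openSegment_rep hA hxKA hxA
      have hane : a ≠ y := by
        rintro rfl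
        rw [openSegment_same, mem_singleton_iff] at hmem
        exact hxA (hmem ▸ haA)
      have hchord : segment ℝ a y ⊆ frontier KA :=
        chord_frontier hKAx hKAc (subset_convexHull ℝ A haA) hyK hmem hxP.1
      obtain ⟨u, v, hE, hsub⟩ := exists_maxEdge hKAx hKAc hKAcpt hane hchord
      have hxseg : x ∈ segment ℝ u v := hsub (openSegment_subset_segment ℝ a y hmem)
      have huA : u ∈ A := maxEdge_end_mem hrank hA hE
      have hvA : v ∈ A := maxEdge_end_mem hrank hA hE.symm
      exact ⟨u, v, fun _ _ => ⟨hE, huA, hvA, mem_openSegment_of_ne hE.1 hxseg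
        (fun h => hxA (h ▸ huA)) (fun h => hxA (h ▸ hvA))⟩⟩
    · exact ⟨x, x, fun hP hnA => absurd ⟨hP, hnA⟩ hx⟩
  choose uF vF hspecF using hedge
  -- the "other point" on the edge of x, if any
  have hother : ∀ x : EuclideanSpace ℝ (Fin 2), ∃ y : EuclideanSpace ℝ (Fin 2),
      (∃ y', y' ∈ P ∧ y' ≠ x ∧ y' ∈ openSegment ℝ (uF x) (vF x)) →
      (y ∈ P ∧ y ≠ x ∧ y ∈ openSegment ℝ (uF x) (vF x)) := by
    intro x
    by_cases h : ∃ y', y' ∈ P ∧ y' ≠ x ∧ y' ∈ openSegment ℝ (uF x) (vF x)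
    · exact ⟨h.choose, fun _ => h.choose_spec⟩
    · exact ⟨x, fun hc => absurd hc h⟩
  choose oF hoF using hother
  -- the tag
  set Ew : EuclideanSpace ℝ (Fin 2) → Set (Set (EuclideanSpace ℝ (Fin 2))) :=
    fun w => {S | ∃ z, IsMaxEdge KA w z ∧ S = segment ℝ w z} with hEwdef
  have hEwpair : ∀ w, ∃ e1 e2, Ew w ⊆ {e1, e2} := by
    intro w
    apply subset_pair
    rintro S1 ⟨z1, hz1, rfl⟩ S2 ⟨z2, hz2, rfl⟩ S3 ⟨z3, hz3, rfl⟩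
    by_contra hcon
    push_neg at hcon
    obtain ⟨hne1, hne2, hne3⟩ := hcon
    exact no_three_edges_at_vertex hrank hKAx hKAc hz1 hz2 hz3
      (fun h => hne1 (by rw [h])) (fun h => hne2 (by rw [h])) (fun h => hne3 (by rw [h]))
  choose tE1 tE2 htpair using hEwpair
  set tagF : EuclideanSpace ℝ (Fin 2) → Set (EuclideanSpace ℝ (Fin 2)) → Bool :=
    fun w S => if S = tE2 w then true else false with htagdef
  have htaginj : ∀ w S1 S2, S1 ∈ Ew w → S2 ∈ Ew w → tagF w S1 = tagF w S2 → S1 = S2 := by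
    intro w S1 S2 h1 h2 heq
    have m1 := htpair w h1
    have m2 := htpair w h2
    rw [mem_insert_iff, mem_singleton_iff] at m1 m2
    simp only [htagdef] at heq
    rcases m1 with rfl | rfl <;> rcases m2 with rfl | rfl
    · rfl
    · by_cases h : tE1 w = tE2 w
      · exact h
      · rw [if_neg h, if_pos rfl] at heq; exact absurd heq (by simp)
    · by_cases h : tE1 w = tE2 w
      · exact h.symm
      · rw [if_neg h, if_pos rfl] at heq; exact absurd heq (by simp)
    · rfl
  -- the slot choice
  set wF : EuclideanSpace ℝ (Fin 2) → EuclideanSpace ℝ (Fin 2) := fun x =>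
    if (∃ y', y' ∈ P ∧ y' ≠ x ∧ y' ∈ openSegment ℝ (uF x) (vF x)) then
      (if dist x (uF x) < dist (oF x) (uF x) then uF x else vF x)
    else (if uF x ∈ P then vF x else uF x) with hwFdef
  set f : EuclideanSpace ℝ (Fin 2) → EuclideanSpace ℝ (Fin 2) × Bool := fun x =>
    if x ∈ A then (x, false) else (wF x, tagF (wF x) (segment ℝ (uF x) (vF x))) with hfdef
  -- the specification of f on P
  have hfspec : ∀ x, x ∈ P → (x ∈ A ∧ f x = (x, false)) ∨
      (x ∉ A ∧ ∃ u v, IsMaxEdge KA u v ∧ u ∈ A ∧ v ∈ A ∧ x ∈ openSegment ℝ u v ∧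
        ((f x).1 = u ∨ (f x).1 = v) ∧ (f x).1 ∉ P ∧
        (f x).2 = tagF (f x).1 (segment ℝ u v) ∧
        ∀ y, y ∈ P → y ≠ x → y ∈ openSegment ℝ u v → dist x (f x).1 < dist y (f x).1) := by
    intro x hxP
    by_cases hxA : x ∈ A
    · left
      refine ⟨hxA, ?_⟩
      rw [hfdef]
      simp only [if_pos hxA]
    · right
      refine ⟨hxA, ?_⟩
      obtain ⟨hE, huA, hvA, hxuv⟩ := hspecF x hxP hxA
      have hfx : f x = (wF x, tagF (wF x) (segment ℝ (uF x) (vF x))) := by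
        rw [hfdef]; simp only [if_neg hxA]
      have hxseg : x ∈ segment ℝ (uF x) (vF x) := openSegment_subset_segment ℝ _ _ hxuv
      have hxu : x ≠ uF x := fun h => hxA (h ▸ huA)
      have hxv : x ≠ vF x := fun h => hxA (h ▸ hvA)
      refine ⟨uF x, vF x, hE, huA, hvA, hxuv, ?_⟩
      by_cases h2 : ∃ y', y' ∈ P ∧ y' ≠ x ∧ y' ∈ openSegment ℝ (uF x) (vF x)
      · obtain ⟨hy0P, hy0x, hy0o⟩ := hoF x h2
        have hy0seg : oF x ∈ segment ℝ (uF x) (vF x) := openSegment_subset_segment ℝ _ _ hy0o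
        have hy0u : oF x ≠ uF x := by
          rintro h
          rw [h] at hy0o
          exact hE.1 (left_mem_openSegment_iff.1 hy0o)
        have hy0v : oF x ≠ vF x := by
          rintro h
          rw [h] at hy0o
          exact hE.1 (right_mem_openSegment_iff.1 hy0o)
        -- at most these two points of P on the open segment
        have honly : ∀ y, y ∈ P → y ≠ x → y ∈ openSegment ℝ (uF x) (vF x) → y = oF x := by
          intro y hyP hyx hyo
          by_contra hyo0
          exact hno3 (uF x) (vF x) x hxP (oF x) hy0P y hyP hxseg hy0seg
            (openSegment_subset_segment ℝ _ _ hyo) hy0x.symm (Ne.symm hyx) (Ne.symm hyo0)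
        by_cases hcmp : dist x (uF x) < dist (oF x) (uF x)
        · have hw : wF x = uF x := by rw [hwFdef]; simp only [if_pos h2, if_pos hcmp]
          rw [hfx, hw]
          refine ⟨Or.inl rfl, ?_, rfl, ?_⟩
          · -- uF x ∉ P
            intro huP
            exact hno3 (uF x) (vF x) (uF x) huP x hxP (oF x) hy0P
              (left_mem_segment ℝ _ _) hxseg hy0seg (Ne.symm hxu) hy0u.symm hy0x.symm
          · intro y hyP hyx hyo
            rw [honly y hyP hyx hyo]
            exact hcmp
        · have hw : wF x = vF x := by rw [hwFdef]; simp only [if_pos h2, if_neg hcmp]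
          rw [hfx, hw]
          have hdkey : dist x (vF x) < dist (oF x) (vF x) :=
            closer_flip hE.1 hxuv hy0o (Ne.symm hy0x) hcmp
          refine ⟨Or.inr rfl, ?_, rfl, ?_⟩
          · intro hvP
            exact hno3 (uF x) (vF x) (vF x) hvP x hxP (oF x) hy0P
              (right_mem_segment ℝ _ _) hxseg hy0seg (Ne.symm hxv) hy0v.symm hy0x.symm
          · intro y hyP hyx hyo
            rw [honly y hyP hyx hyo]
            exact hdkey
      · by_cases huP : uF x ∈ P
        · have hw : wF x = vF x := by rw [hwFdef]; simp only [if_neg h2, if_pos huP]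
          rw [hfx, hw]
          refine ⟨Or.inr rfl, ?_, rfl, ?_⟩
          · intro hvP
            exact hno3 (uF x) (vF x) (uF x) huP (vF x) hvP x hxP (left_mem_segment ℝ _ _)
              (right_mem_segment ℝ _ _) hxseg hE.1 (Ne.symm hxu) (Ne.symm hxv)
          · intro y hyP hyx hyo
            exact absurd ⟨y, hyP, hyx, hyo⟩ h2
        · have hw : wF x = uF x := by rw [hwFdef]; simp only [if_neg h2, if_neg huP]
          rw [hfx, hw]
          refine ⟨Or.inl rfl, huP, rfl, ?_⟩
          intro y hyP hyx hyo
          exact absurd ⟨y, hyP, hyx, hyo⟩ h2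
  -- f is injective on P
  have hinj : Set.InjOn f P := by
    intro x hx y hy hfeq
    by_contra hne
    rcases hfspec x hx with ⟨hxA, hfx⟩ | ⟨hxA, u, v, hE, huA, hvA, hxuv, hwuv, hwP, htag, hdist⟩
    · rcases hfspec y hy with ⟨hyA, hfy⟩ | ⟨hyA, u', v', hE', hu'A, hv'A, hyuv, hwuv', hwP', htag', hdist'⟩
      · rw [hfx, hfy] at hfeq
        exact hne (congrArg Prod.fst hfeq)
      · -- (f y).1 ∉ P but f y = f x = (x,false) with x ∈ P
        rw [hfx] at hfeq
        apply hwP'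
        rw [← hfeq]
        exact hx
    · rcases hfspec y hy with ⟨hyA, hfy⟩ | ⟨hyA, u', v', hE', hu'A, hv'A, hyuv, hwuv', hwP', htag', hdist'⟩
      · rw [hfy] at hfeq
        apply hwP
        rw [hfeq]
        exact hy
      · -- both edge points
        have hw : (f x).1 = (f y).1 := congrArg Prod.fst hfeq
        set w := (f x).1 with hwdef
        -- both segments are edges at w
        have hmem1 : segment ℝ u v ∈ Ew w := by
          rcases hwuv with h | h
          · exact ⟨v, by rw [h]; exact hE, by rw [h]⟩
          · exact ⟨u, by rw [h]; exact hE.symm, by rw [h, segment_symm]⟩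
        have hmem2 : segment ℝ u' v' ∈ Ew w := by
          rcases hwuv' with h | h
          · exact ⟨v', by rw [hw, h]; exact hE', by rw [hw, h]⟩
          · exact ⟨u', by rw [hw, h]; exact hE'.symm, by rw [hw, h, segment_symm]⟩
        have hsegeq : segment ℝ u v = segment ℝ u' v' := by
          apply htaginj w _ _ hmem1 hmem2
          calc tagF w (segment ℝ u v) = (f x).2 := htag.symm
          _ = (f y).2 := congrArg Prod.snd hfeq
          _ = tagF ((f y).1) (segment ℝ u' v') := htag'
          _ = tagF w (segment ℝ u' v') := by rw [← hw]
        -- y lies on x's open edge and vice versa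
        have hyopen : y ∈ openSegment ℝ u v := by
          apply mem_openSegment_of_ne hE.1
          · rw [hsegeq]; exact openSegment_subset_segment ℝ _ _ hyuv
          · exact fun h => hyA (h ▸ huA)
          · exact fun h => hyA (h ▸ hvA)
        have hxopen : x ∈ openSegment ℝ u' v' := by
          apply mem_openSegment_of_ne hE'.1
          · rw [← hsegeq]; exact openSegment_subset_segment ℝ _ _ hxuv
          · exact fun h => hxA (h ▸ hu'A)
          · exact fun h => hxA (h ▸ hv'A)
        have h1 := hdist y hy (Ne.symm hne) hyopen
        have h2 := hdist' x hx hne hxopen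
        rw [← hw] at h2
        linarith
  -- conclusion by counting
  have hmaps : ∀ x ∈ P, f x ∈ A ×ˢ (Set.univ : Set Bool) := by
    intro x hx
    rcases hfspec x hx with ⟨hxA, hfx⟩ | ⟨hxA, u, v, hE, huA, hvA, hxuv, hwuv, hwP, htag, hdist⟩
    · rw [hfx]; exact ⟨hxA, trivial⟩
    · refine ⟨?_, trivial⟩
      rcases hwuv with h | h
      · rw [h]; exact huA
      · rw [h]; exact hvA
  have hTfin : (A ×ˢ (Set.univ : Set Bool)).Finite := hA.prod (Set.finite_univ)
  have hPim : f '' P ⊆ A ×ˢ (Set.univ : Set Bool) := by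
    rintro _ ⟨x, hx, rfl⟩
    exact hmaps x hx
  have hPfin : P.Finite := Set.Finite.of_finite_image (hTfin.subset hPim) hinj
  refine ⟨hPfin, ?_⟩
  have h1 : P.ncard = (f '' P).ncard := (Set.ncard_image_of_injOn hinj).symm
  have h2 : (f '' P).ncard ≤ (A ×ˢ (Set.univ : Set Bool)).ncard :=
    Set.ncard_le_ncard hPim hTfin
  have h3 : (A ×ˢ (Set.univ : Set Bool)).ncard ≤ 2 * A.ncard := by
    have hun : A ×ˢ (Set.univ : Set Bool) =
        ((fun a => (a, false)) '' A) ∪ ((fun a => (a, true)) '' A) := by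
      ext ⟨a, b⟩
      constructor
      · rintro ⟨ha, -⟩
        cases b
        · exact Or.inl ⟨a, ha, rfl⟩
        · exact Or.inr ⟨a, ha, rfl⟩
      · rintro (⟨a', ha', heq⟩ | ⟨a', ha', heq⟩) <;>
          (cases heq; exact ⟨ha', trivial⟩)
    rw [hun]
    have hi1 : Function.Injective (fun a : EuclideanSpace ℝ (Fin 2) => (a, false)) := by
      intro a a' h
      exact (Prod.ext_iff.1 h).1
    have hi2 : Function.Injective (fun a : EuclideanSpace ℝ (Fin 2) => (a, true)) := by
      intro a a' h
      exact (Prod.ext_iff.1 h).1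
    calc (((fun a => (a, false)) '' A) ∪ ((fun a => (a, true)) '' A)).ncard
        ≤ ((fun a => (a, false)) '' A).ncard + ((fun a => (a, true)) '' A).ncard :=
          Set.ncard_union_le _ _
    _ = A.ncard + A.ncard := by
          rw [Set.ncard_image_of_injective _ hi1, Set.ncard_image_of_injective _ hi2]
    _ = 2 * A.ncard := by ring
  rw [h1]
  exact h2.trans h3
end

section
/- Let S be a finite subset of ℝ² such that convexHull(S) has nonempty interior. Then the frontier of convexHull(S) equals the union of all closed segments [p,q] with p, q ∈ S, p ≠ q, such that [p,q] is contained in the frontier of convexHull(S). -/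
open scoped RealInnerProductSpace
open Real

noncomputable def rotAux (u : EuclideanSpace ℝ (Fin 2)) : EuclideanSpace ℝ (Fin 2) :=
  (WithLp.equiv 2 (Fin 2 → ℝ)).symm ![-(u 1), u 0]

theorem rotAux_inj (u d : EuclideanSpace ℝ (Fin 2)) (hu : u ≠ 0) (h1 : ⟪u, d⟫ = 0)
    (h2 : ⟪rotAux u, d⟫ = 0) : d = 0 := by
  simp [rotAux, PiLp.inner_apply, RCLike.inner_apply, Fin.sum_univ_two] at h1 h2
  have hu2 : u 0 ≠ 0 ∨ u 1 ≠ 0 := by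
    by_contra h
    push_neg at h
    apply hu
    ext i
    fin_cases i <;> simp [h.1, h.2]
  have hs : u 0 ^ 2 + u 1 ^ 2 > 0 := by
    rcases hu2 with h | h <;> positivity
  have e0 : (u 0 ^ 2 + u 1 ^ 2) * d 0 = 0 := by linear_combination u 0 * h1 - u 1 * h2
  have e1 : (u 0 ^ 2 + u 1 ^ 2) * d 1 = 0 := by linear_combination u 1 * h1 + u 0 * h2
  have d0 : d 0 = 0 := by
    rcases mul_eq_zero.1 e0 with h | h
    · exact absurd h (ne_of_gt hs)
    · exact h
  have d1 : d 1 = 0 := by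
    rcases mul_eq_zero.1 e1 with h | h
    · exact absurd h (ne_of_gt hs)
    · exact h
  ext i
  fin_cases i <;> simp [d0, d1]

theorem rotAux_orth (u : EuclideanSpace ℝ (Fin 2)) : ⟪u, rotAux u⟫ = 0 := by
  simp [rotAux, PiLp.inner_apply, RCLike.inner_apply, Fin.sum_univ_two]; ring

theorem rotAux_ne (u : EuclideanSpace ℝ (Fin 2)) (hu : u ≠ 0) : rotAux u ≠ 0 := by
  intro h
  apply hu
  have h0 := congrArg (fun v => v 0) h
  have h1 := congrArg (fun v => v 1) h
  simp [rotAux] at h0 h1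
  ext i
  fin_cases i <;> simp [h0, h1]

theorem mem_frontier_of_max (K : Set (EuclideanSpace ℝ (Fin 2))) (hK : IsClosed K)
    (v : EuclideanSpace ℝ (Fin 2)) (hv : v ≠ 0) (c : ℝ)
    (hsup : ∀ z ∈ K, ⟪v, z⟫ ≤ c) {y : EuclideanSpace ℝ (Fin 2)} (hy : y ∈ K)
    (hyc : ⟪v, y⟫ = c) : y ∈ frontier K := by
  rw [frontier, hK.closure_eq]
  refine ⟨hy, fun hmem => ?_⟩
  rcases Metric.isOpen_iff.1 isOpen_interior y hmem with ⟨ε, hε, hball⟩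
  have hvn : (0:ℝ) < ‖v‖ := norm_pos_iff.2 hv
  set a : ℝ := ε / (2 * ‖v‖) with ha
  have hap : 0 < a := by positivity
  have hz : y + a • v ∈ K := by
    apply interior_subset
    apply hball
    rw [Metric.mem_ball, dist_eq_norm]
    have h1 : ‖y + a • v - y‖ = a * ‖v‖ := by
      simp [norm_smul, abs_of_pos hap]
    have h2 : a * ‖v‖ = ε / 2 := by rw [ha]; field_simp
    rw [h1, h2]; linarith
  have hle := hsup _ hz
  rw [inner_add_right, real_inner_smul_right, hyc, real_inner_self_eq_norm_sq] at hle
  have : 0 < a * ‖v‖ ^ 2 := by positivity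
  linarith

theorem inner_le_of_mem_hull (v : EuclideanSpace ℝ (Fin 2)) (m : ℝ)
    (T : Set (EuclideanSpace ℝ (Fin 2))) (hT : ∀ y ∈ T, ⟪v, y⟫ ≤ m)
    {x : EuclideanSpace ℝ (Fin 2)} (hx : x ∈ convexHull ℝ T) : ⟪v, x⟫ ≤ m := by
  have hlin : IsLinearMap ℝ (fun z : EuclideanSpace ℝ (Fin 2) => ⟪v, z⟫) :=
    ⟨fun a b => inner_add_right v a b, fun r a => real_inner_smul_right v a r⟩
  exact convexHull_min hT (convex_halfSpace_le hlin m) hx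

theorem inner_ge_of_mem_hull (v : EuclideanSpace ℝ (Fin 2)) (m : ℝ)
    (T : Set (EuclideanSpace ℝ (Fin 2))) (hT : ∀ y ∈ T, m ≤ ⟪v, y⟫)
    {x : EuclideanSpace ℝ (Fin 2)} (hx : x ∈ convexHull ℝ T) : m ≤ ⟪v, x⟫ := by
  have h := inner_le_of_mem_hull (-v) (-m) T (fun y hy => by
    rw [inner_neg_left]; linarith [hT y hy]) hx
  rw [inner_neg_left] at h
  linarith

theorem exists_support (S : Set (EuclideanSpace ℝ (Fin 2))) (hS : S.Finite)
    (hint : (interior (convexHull ℝ S)).Nonempty) {x : EuclideanSpace ℝ (Fin 2)}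
    (hx : x ∈ frontier (convexHull ℝ S)) :
    ∃ u : EuclideanSpace ℝ (Fin 2), u ≠ 0 ∧ x ∈ convexHull ℝ S ∧
      ∀ z ∈ convexHull ℝ S, ⟪u, z⟫ ≤ ⟪u, x⟫ := by
  have hconv : Convex ℝ (convexHull ℝ S) := convex_convexHull ℝ S
  have hclosed : IsClosed (convexHull ℝ S) := hS.isClosed_convexHull (𝕜 := ℝ)
  rw [frontier, hclosed.closure_eq] at hx
  obtain ⟨hxK, hxint⟩ := hx
  obtain ⟨f, hf⟩ := geometric_hahn_banach_open_point hconv.interior isOpen_interior hxint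
  obtain ⟨a, ha⟩ := hint
  have hfa : f a < f x := hf a ha
  have hsup : ∀ z ∈ convexHull ℝ S, f z ≤ f x := by
    intro z hz
    by_contra hgt
    push_neg at hgt
    have hden : (0:ℝ) < f z - f a := by linarith
    set t : ℝ := (f z - f x) / (2 * (f z - f a)) with ht
    have ht0 : 0 < t := div_pos (by linarith) (by linarith)
    have ht1 : t ≤ 1 := by
      rw [ht, div_le_one (by positivity)]
      linarith
    have hcombo := hconv.add_smul_sub_mem_interior hz ha ⟨ht0, ht1⟩
    have hlt := hf _ hcombo
    have hfc : f (z + t • (a - z)) = f z + t * (f a - f z) := by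
      simp [map_add, map_smul, map_sub]
    rw [hfc] at hlt
    have htv : t * (f a - f z) = -((f z - f x)/2) := by
      rw [ht]; field_simp; ring
    rw [htv] at hlt
    linarith
  refine ⟨(InnerProductSpace.toDual ℝ (EuclideanSpace ℝ (Fin 2))).symm f, ?_, hxK, ?_⟩
  · intro h
    have h1 : f a = ⟪(InnerProductSpace.toDual ℝ (EuclideanSpace ℝ (Fin 2))).symm f, a⟫ :=
      (InnerProductSpace.toDual_symm_apply).symm
    have h2 : f x = ⟪(InnerProductSpace.toDual ℝ (EuclideanSpace ℝ (Fin 2))).symm f, x⟫ :=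
      (InnerProductSpace.toDual_symm_apply).symm
    rw [h] at h1 h2
    simp at h1 h2
    rw [h1, h2] at hfa
    exact lt_irrefl _ hfa
  · intro z hz
    rw [InnerProductSpace.toDual_symm_apply, InnerProductSpace.toDual_symm_apply]
    exact hsup z hz

theorem face_lemma (S : Set (EuclideanSpace ℝ (Fin 2))) (hS : S.Finite)
    (u : EuclideanSpace ℝ (Fin 2)) (c : ℝ)
    (hsupS : ∀ s ∈ S, ⟪u, s⟫ ≤ c) {x : EuclideanSpace ℝ (Fin 2)}
    (hx : x ∈ convexHull ℝ S) (hxc : ⟪u, x⟫ = c) :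
    ∃ T : Finset (EuclideanSpace ℝ (Fin 2)), ↑T ⊆ S ∧ T.Nonempty ∧ (∀ y ∈ T, ⟪u, y⟫ = c) ∧
      (∀ s ∈ S, ⟪u, s⟫ = c → s ∈ T) ∧ x ∈ convexHull ℝ (↑T : Set (EuclideanSpace ℝ (Fin 2))) := by
  classical
  set F : Finset (EuclideanSpace ℝ (Fin 2)) := hS.toFinset with hF
  have hFS : (↑F : Set (EuclideanSpace ℝ (Fin 2))) = S := hS.coe_toFinset
  rw [← hFS] at hx
  rw [Finset.convexHull_eq] at hx
  obtain ⟨w, hw0, hw1, hwx⟩ := hx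
  rw [Finset.centerMass_eq_of_sum_1 _ _ hw1] at hwx
  simp only [id] at hwx
  set T : Finset (EuclideanSpace ℝ (Fin 2)) := F.filter (fun y => ⟪u, y⟫ = c) with hT
  have hTS : (↑T : Set (EuclideanSpace ℝ (Fin 2))) ⊆ S := by
    rw [← hFS]; exact_mod_cast Finset.filter_subset _ _
  have hkey : ∀ y ∈ F, w y * (c - ⟪u, y⟫) = 0 := by
    have hsum : ∑ y ∈ F, w y * (c - ⟪u, y⟫) = 0 := by
      have h1 : ∑ y ∈ F, w y * ⟪u, y⟫ = c := by
        have : ⟪u, x⟫ = ∑ y ∈ F, w y * ⟪u, y⟫ := by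
          rw [← hwx, inner_sum]
          exact Finset.sum_congr rfl fun y _ => real_inner_smul_right _ _ _
        rw [← this, hxc]
      simp only [mul_sub]
      rw [Finset.sum_sub_distrib, ← Finset.sum_mul, hw1, h1]
      ring
    intro y hy
    have := (Finset.sum_eq_zero_iff_of_nonneg ?_).1 hsum y hy
    · exact this
    · intro i hi
      have h1 := hw0 i hi
      have h2 := hsupS i (by rw [← hFS]; exact_mod_cast hi)
      nlinarith
  have hzero : ∀ y ∈ F, y ∉ T → w y = 0 := by
    intro y hy hyT
    rcases mul_eq_zero.1 (hkey y hy) with h | h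
    · exact h
    · exfalso; exact hyT (Finset.mem_filter.2 ⟨hy, by linarith⟩)
  have hw1T : ∑ y ∈ T, w y = 1 := by
    rw [← hw1]
    exact Finset.sum_subset (Finset.filter_subset _ _) hzero
  have hwxT : ∑ y ∈ T, w y • y = x := by
    rw [← hwx]
    exact Finset.sum_subset (Finset.filter_subset _ _) (fun y hy hyT => by
      rw [hzero y hy hyT, zero_smul])
  refine ⟨T, hTS, ?_, ?_, ?_, ?_⟩
  · rcases Finset.eq_empty_or_nonempty T with h | h
    · exfalso; rw [h, Finset.sum_empty] at hw1T; norm_num at hw1T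
    · exact h
  · intro y hy; exact (Finset.mem_filter.1 hy).2
  · intro s hs hsc
    exact Finset.mem_filter.2 ⟨by rw [hF, Set.Finite.mem_toFinset]; exact hs, hsc⟩
  · have hmem := T.centerMass_mem_convexHull (fun y hy => hw0 y (Finset.filter_subset _ _ hy))
      (by rw [hw1T]; norm_num) (fun y hy => Finset.mem_coe.2 hy)
    rw [Finset.centerMass_eq_of_sum_1 _ _ hw1T] at hmem
    rwa [hwxT] at hmem

theorem vertex_lemma (S : Set (EuclideanSpace ℝ (Fin 2))) (hS : S.Finite)
    (p : EuclideanSpace ℝ (Fin 2)) (hp : p ∈ S) (u : EuclideanSpace ℝ (Fin 2)) (hu : u ≠ 0)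
    (hw : rotAux u ≠ 0) (horth : ⟪u, rotAux u⟫ = 0)
    (hstrict : ∀ s ∈ S, s ≠ p → ⟪u, s⟫ < ⟪u, p⟫) (hex : ∃ s ∈ S, s ≠ p) :
    ∃ q ∈ S, q ≠ p ∧ ∃ v : EuclideanSpace ℝ (Fin 2), v ≠ 0 ∧ ⟪v, q⟫ = ⟪v, p⟫ ∧
      ∀ s ∈ S, ⟪v, s⟫ ≤ ⟪v, p⟫ := by
  classical
  set w := rotAux u with hwdef
  set φ : EuclideanSpace ℝ (Fin 2) → ℝ → ℝ :=
    fun s θ => Real.cos θ * ⟪u, s - p⟫ + Real.sin θ * ⟪w, s - p⟫ with hφ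
  set A : Set ℝ := {θ | θ ∈ Set.Icc 0 π ∧ ∀ s ∈ S, φ s θ ≤ 0} with hA
  have hφp : ∀ θ, φ p θ = 0 := by intro θ; simp [hφ]
  have hA0 : (0:ℝ) ∈ A := by
    refine ⟨⟨le_refl 0, Real.pi_pos.le⟩, fun s hs => ?_⟩
    by_cases hsp : s = p
    · rw [hsp, hφp]
    · have := hstrict s hs hsp
      simp only [hφ, Real.cos_zero, Real.sin_zero, one_mul, zero_mul, add_zero, inner_sub_right]
      linarith
  have hφcont : ∀ s, Continuous (φ s) := by
    intro s
    exact (Real.continuous_cos.mul continuous_const).add (Real.continuous_sin.mul continuous_const)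
  have hAclosed : IsClosed A := by
    have : A = Set.Icc 0 π ∩ ⋂ s ∈ S, (φ s) ⁻¹' Set.Iic 0 := by
      ext θ; simp [hA, Set.mem_iInter]
    rw [this]
    exact isClosed_Icc.inter (isClosed_biInter fun s _ => (isClosed_Iic.preimage (hφcont s)))
  have hAbdd : BddAbove A := ⟨π, fun θ hθ => hθ.1.2⟩
  set θs := sSup A with hθs
  have hθsA : θs ∈ A := hAclosed.csSup_mem ⟨0, hA0⟩ hAbdd
  obtain ⟨s₀, hs₀S, hs₀p⟩ := hex
  have hπA : π ∉ A := by
    intro hπ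
    have h1 := hπ.2 s₀ hs₀S
    have h2 : ⟪u, s₀ - p⟫ < 0 := by
      rw [inner_sub_right]; linarith [hstrict s₀ hs₀S hs₀p]
    simp only [hφ, Real.cos_pi, Real.sin_pi, zero_mul, add_zero, neg_one_mul] at h1
    linarith
  have hθslt : θs < π := lt_of_le_of_ne hθsA.1.2 (fun h => hπA (h ▸ hθsA))
  have hqex : ∃ q ∈ S, q ≠ p ∧ φ q θs = 0 := by
    by_contra hcon
    push_neg at hcon
    have hstrict' : ∀ s ∈ S, s ≠ p → φ s θs < 0 := by
      intro s hs hsp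
      exact lt_of_le_of_ne (hθsA.2 s hs) (hcon s hs hsp)
    have hev : ∀ᶠ θ in nhds θs, (∀ s ∈ S, s ≠ p → φ s θ < 0) ∧ θ < π := by
      refine Filter.Eventually.and ?_ (Filter.Tendsto.eventually_lt_const hθslt Filter.tendsto_id)
      rw [hS.eventually_all]
      intro s hs
      by_cases hsp : s = p
      · filter_upwards with θ h
        exact absurd hsp h
      · filter_upwards [((hφcont s).continuousAt (x := θs)).eventually_lt_const
          (hstrict' s hs hsp)] with θ hθ h'
        exact hθ
    rcases Metric.eventually_nhds_iff.1 hev with ⟨ε, hε, hball⟩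
    have hθ' := hball (y := θs + ε/2) (by
      rw [Real.dist_eq, show θs + ε/2 - θs = ε/2 by ring, abs_of_pos (by linarith)]
      linarith)
    have : θs + ε/2 ∈ A := by
      refine ⟨⟨by linarith [hθsA.1.1], le_of_lt hθ'.2⟩, fun s hs => ?_⟩
      by_cases hsp : s = p
      · rw [hsp, hφp]
      · exact le_of_lt (hθ'.1 s hs hsp)
    have := le_csSup hAbdd this
    linarith
  obtain ⟨q, hqS, hqp, hq0⟩ := hqex
  set v : EuclideanSpace ℝ (Fin 2) := Real.cos θs • u + Real.sin θs • w with hv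
  have hvinner : ∀ y : EuclideanSpace ℝ (Fin 2),
      ⟪v, y⟫ = Real.cos θs * ⟪u, y⟫ + Real.sin θs * ⟪w, y⟫ := by
    intro y
    simp only [hv, inner_add_left, real_inner_smul_left]
  have hφv : ∀ s : EuclideanSpace ℝ (Fin 2), φ s θs = ⟪v, s⟫ - ⟪v, p⟫ := by
    intro s
    rw [hvinner, hvinner]
    simp only [hφ, inner_sub_right]
    ring
  have hvne : v ≠ 0 := by
    intro h0
    have hwu : ⟪w, u⟫ = 0 := by rw [real_inner_comm]; exact horth
    have hu2 : ⟪v, u⟫ = Real.cos θs * ‖u‖^2 := by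
      rw [hvinner, hwu, real_inner_self_eq_norm_sq]; ring
    have hw2 : ⟪v, w⟫ = Real.sin θs * ‖w‖^2 := by
      rw [hvinner, horth, real_inner_self_eq_norm_sq]; ring
    rw [h0, inner_zero_left] at hu2 hw2
    have hun : (0:ℝ) < ‖u‖^2 := pow_pos (norm_pos_iff.2 hu) 2
    have hwn : (0:ℝ) < ‖w‖^2 := pow_pos (norm_pos_iff.2 hw) 2
    have hc : Real.cos θs = 0 := by
      rcases mul_eq_zero.1 hu2.symm with h | h
      · exact h
      · linarith
    have hsn : Real.sin θs = 0 := by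
      rcases mul_eq_zero.1 hw2.symm with h | h
      · exact h
      · linarith
    have := Real.sin_sq_add_cos_sq θs
    rw [hc, hsn] at this
    norm_num at this
  refine ⟨q, hqS, hqp, v, hvne, ?_, ?_⟩
  · have := hφv q; rw [hq0] at this; linarith
  · intro s hs
    have h1 := hθsA.2 s hs
    rw [hφv s] at h1
    linarith

/-- The boundary of the convex hull of a finite set `S` (with nonempty interior)
is covered by, and equal to, the union of the segments between points of `S`
that lie entirely on the boundary. -/
theorem frontier_convexHull_eq_union_edges
    (S : Set (EuclideanSpace ℝ (Fin 2))) (hS : S.Finite)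
    (hint : (interior (convexHull ℝ S)).Nonempty) :
    frontier (convexHull ℝ S) =
      {x : EuclideanSpace ℝ (Fin 2) | ∃ p ∈ S, ∃ q ∈ S, p ≠ q ∧
        segment ℝ p q ⊆ frontier (convexHull ℝ S) ∧ x ∈ segment ℝ p q} := by
  classical
  have hclosed : IsClosed (convexHull ℝ S) := hS.isClosed_convexHull (𝕜 := ℝ)
  apply Set.Subset.antisymm
  · intro x hx
    obtain ⟨u, hu, hxK, hsup⟩ := exists_support S hS hint hx
    set c := ⟪u, x⟫ with hc
    have hsupS : ∀ s ∈ S, ⟪u, s⟫ ≤ c := fun s hs => hsup s (subset_convexHull ℝ S hs)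
    obtain ⟨T, hTS, hTne, hTc, hTmax, hxT⟩ := face_lemma S hS u c hsupS hxK rfl
    set w := rotAux u with hwdef
    obtain ⟨p, hpT, hpmin⟩ := T.exists_min_image (fun y => ⟪w, y⟫) hTne
    obtain ⟨q, hqT, hqmax⟩ := T.exists_max_image (fun y => ⟪w, y⟫) hTne
    have hpS : p ∈ S := hTS hpT
    have hqS : q ∈ S := hTS hqT
    by_cases hpq : ⟪w, p⟫ = ⟪w, q⟫
    · -- vertex case : T reduces to {p}, rotate the support functional
      have hTp : ∀ y ∈ T, y = p := by
        intro y hy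
        have h1 : ⟪u, y - p⟫ = 0 := by
          rw [inner_sub_right, hTc y hy, hTc p hpT]; ring
        have hle1 : ⟪w, y⟫ ≤ ⟪w, p⟫ := by
          calc ⟪w, y⟫ ≤ ⟪w, q⟫ := hqmax y hy
          _ = ⟪w, p⟫ := hpq.symm
        have hle2 : ⟪w, p⟫ ≤ ⟪w, y⟫ := hpmin y hy
        have h2 : ⟪w, y - p⟫ = 0 := by
          rw [inner_sub_right]; linarith
        have := rotAux_inj u (y - p) hu h1 h2
        exact sub_eq_zero.1 this
      have hxp : x = p := by
        have hsub : (↑T : Set (EuclideanSpace ℝ (Fin 2))) ⊆ {p} := by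
          intro y hy; exact hTp y (Finset.mem_coe.1 hy)
        have := convexHull_mono hsub hxT
        rwa [convexHull_singleton, Set.mem_singleton_iff] at this
      have hcp : ⟪u, p⟫ = c := hTc p hpT
      have hstrict : ∀ s ∈ S, s ≠ p → ⟪u, s⟫ < ⟪u, p⟫ := by
        intro s hs hsp
        rw [hcp]
        rcases lt_or_eq_of_le (hsupS s hs) with h | h
        · exact h
        · exact absurd (hTp s (hTmax s hs h)) hsp
      have hex : ∃ s ∈ S, s ≠ p := by
        by_contra hcon
        push_neg at hcon
        have hSp : S ⊆ {p} := fun s hs => hcon s hs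
        have : convexHull ℝ S ⊆ {p} := by
          have h := convexHull_mono (𝕜 := ℝ) hSp
          rwa [convexHull_singleton] at h
        obtain ⟨a, ha⟩ := hint
        have : a ∈ interior ({p} : Set (EuclideanSpace ℝ (Fin 2))) :=
          interior_mono this ha
        rw [interior_singleton] at this
        exact this
      obtain ⟨q', hq'S, hq'p, v, hvne, hveq, hvsup⟩ :=
        vertex_lemma S hS p hpS u hu (rotAux_ne u hu) (rotAux_orth u) hstrict hex
      have hsupK : ∀ z ∈ convexHull ℝ S, ⟪v, z⟫ ≤ ⟪v, p⟫ :=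
        fun z hz => inner_le_of_mem_hull v _ S hvsup hz
      have hsegK : segment ℝ p q' ⊆ convexHull ℝ S :=
        (convex_convexHull ℝ S).segment_subset (subset_convexHull ℝ S hpS)
          (subset_convexHull ℝ S hq'S)
      refine ⟨p, hpS, q', hq'S, Ne.symm hq'p, ?_, ?_⟩
      · intro z hz
        obtain ⟨a, b, ha, hb, hab, rfl⟩ := hz
        have hzc : ⟪v, a • p + b • q'⟫ = ⟪v, p⟫ := by
          simp only [inner_add_right, real_inner_smul_right, hveq]
          linear_combination (⟪v, p⟫ : ℝ) * hab
        exact mem_frontier_of_max _ hclosed v hvne _ hsupK (hsegK ⟨a, b, ha, hb, hab, rfl⟩) hzc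
      · rw [hxp]; exact left_mem_segment ℝ p q'
    · -- edge case : x lies on the segment between p and q
      have hlt : ⟪w, p⟫ < ⟪w, q⟫ := lt_of_le_of_ne (hpmin q hqT) hpq
      have hgx1 : ⟪w, p⟫ ≤ ⟪w, x⟫ :=
        inner_ge_of_mem_hull w _ _ (fun y hy => hpmin y (Finset.mem_coe.1 hy)) hxT
      have hgx2 : ⟪w, x⟫ ≤ ⟪w, q⟫ :=
        inner_le_of_mem_hull w _ _ (fun y hy => hqmax y (Finset.mem_coe.1 hy)) hxT
      set t : ℝ := (⟪w, x⟫ - ⟪w, p⟫) / (⟪w, q⟫ - ⟪w, p⟫) with ht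
      clear_value t
      have hden : (0:ℝ) < ⟪w, q⟫ - ⟪w, p⟫ := by linarith
      have ht0 : 0 ≤ t := by
        rw [ht]; exact div_nonneg (by linarith) (by linarith)
      have ht1 : t ≤ 1 := by
        rw [ht, div_le_one hden]; linarith
      have hxy : x = (1 - t) • p + t • q := by
        have h1 : ⟪u, x - ((1 - t) • p + t • q)⟫ = 0 := by
          rw [inner_sub_right, inner_add_right, real_inner_smul_right, real_inner_smul_right,
            hTc p hpT, hTc q hqT, ← hc]
          ring
        have h2 : ⟪w, x - ((1 - t) • p + t • q)⟫ = 0 := by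
          rw [inner_sub_right, inner_add_right, real_inner_smul_right, real_inner_smul_right]
          have h3 : t * (⟪w, q⟫ - ⟪w, p⟫) = ⟪w, x⟫ - ⟪w, p⟫ := by
            rw [ht, div_mul_cancel₀ _ (ne_of_gt hden)]
          linear_combination -h3
        have := rotAux_inj u _ hu h1 h2
        exact sub_eq_zero.1 this
      have hsegK : segment ℝ p q ⊆ convexHull ℝ S :=
        (convex_convexHull ℝ S).segment_subset (subset_convexHull ℝ S hpS)
          (subset_convexHull ℝ S hqS)
      have hsupK : ∀ z ∈ convexHull ℝ S, ⟪u, z⟫ ≤ c :=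
        fun z hz => hsup z hz
      refine ⟨p, hpS, q, hqS, ?_, ?_, ?_⟩
      · intro h; exact hpq (by rw [h])
      · intro z hz
        obtain ⟨a, b, ha, hb, hab, rfl⟩ := hz
        have hzc : ⟪u, a • p + b • q⟫ = c := by
          simp only [inner_add_right, real_inner_smul_right, hTc p hpT, hTc q hqT]
          linear_combination (c : ℝ) * hab
        exact mem_frontier_of_max _ hclosed u hu c hsupK (hsegK ⟨a, b, ha, hb, hab, rfl⟩) hzc
      · exact ⟨1 - t, t, by linarith, ht0, by ring, hxy.symm⟩
  · rintro x ⟨p, hp, q, hq, hpq, hseg, hxseg⟩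
    exact hseg hxseg
end
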